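/- arXiv:1512.03951 — 9 statements merged into one kernel-verified Lean document; each statement's English description precedes it below -/
import Mathlib

section
/- For every real number $n \ge 1$, the function $\xi \mapsto K(\xi)\,\xi^n$ is nonnegative and increasing on $[0,\infty)$: for all $0 \le \xi_1 \le \xi_2$ one has $0 \le K(\xi_1)\xi_1^n \le K(\xi_2)\xi_2^n$. -/
/-- For every real `n ≥ 1`, the function `ξ ↦ K ξ * ξ ^ n` is nonnegative and
increasing on `[0,∞)`. -/
theorem stmt3
    (N : ℕ) (hN : 1 ≤ N)
    (α : Fin (N + 1) → ℝ) (hα0 : α 0 = 0) (hαmono : StrictMono α)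
    (c : Fin (N + 1) → ℝ) (hc : ∀ i, 0 ≤ c i) (hc0 : 0 < c 0) (hcN : 0 < c (Fin.last N))
    (g : ℝ → ℝ) (hg : ∀ s : ℝ, 0 ≤ s → g s = ∑ i, c i * s ^ (α i))
    (sfun : ℝ → ℝ)
    (hsfun : ∀ ξ : ℝ, 0 ≤ ξ → 0 ≤ sfun ξ ∧ sfun ξ * g (sfun ξ) = ξ)
    (K : ℝ → ℝ) (hK : ∀ ξ : ℝ, 0 ≤ ξ → K ξ = 1 / g (sfun ξ)) :
    ∀ n : ℝ, 1 ≤ n → ∀ ξ₁ ξ₂ : ℝ, 0 ≤ ξ₁ → ξ₁ ≤ ξ₂ →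
      0 ≤ K ξ₁ * ξ₁ ^ n ∧ K ξ₁ * ξ₁ ^ n ≤ K ξ₂ * ξ₂ ^ n := by
  have hαnn : ∀ i, 0 ≤ α i := by
    intro i
    rw [← hα0]
    exact hαmono.monotone (Fin.zero_le i)
  have gpos : ∀ s : ℝ, 0 ≤ s → 0 < g s := by
    intro s hs
    rw [hg s hs]
    have h1 : c 0 * s ^ (α 0) ≤ ∑ i, c i * s ^ (α i) :=
      Finset.single_le_sum (f := fun i => c i * s ^ (α i))
        (fun i _ => mul_nonneg (hc i) (Real.rpow_nonneg hs _)) (Finset.mem_univ 0)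
    have h2 : c 0 * s ^ (α 0) = c 0 := by rw [hα0, Real.rpow_zero, mul_one]
    linarith
  have gmono : ∀ s t : ℝ, 0 ≤ s → s ≤ t → g s ≤ g t := by
    intro s t hs hst
    rw [hg s hs, hg t (hs.trans hst)]
    apply Finset.sum_le_sum
    intro i _
    exact mul_le_mul_of_nonneg_left (Real.rpow_le_rpow hs hst (hαnn i)) (hc i)
  intro n hn ξ₁ ξ₂ hξ₁ h12
  have hξ₂ : 0 ≤ ξ₂ := hξ₁.trans h12
  obtain ⟨hs₁, he₁⟩ := hsfun ξ₁ hξ₁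
  obtain ⟨hs₂, he₂⟩ := hsfun ξ₂ hξ₂
  have hg₁ := gpos _ hs₁
  have hg₂ := gpos _ hs₂
  -- monotonicity of sfun
  have hsmono : sfun ξ₁ ≤ sfun ξ₂ := by
    by_contra h
    push_neg at h
    have hgle : g (sfun ξ₂) ≤ g (sfun ξ₁) := gmono _ _ hs₂ h.le
    have : sfun ξ₂ * g (sfun ξ₂) < sfun ξ₁ * g (sfun ξ₁) := by
      calc sfun ξ₂ * g (sfun ξ₂) ≤ sfun ξ₂ * g (sfun ξ₁) :=
            mul_le_mul_of_nonneg_left hgle hs₂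
        _ < sfun ξ₁ * g (sfun ξ₁) := by
            exact mul_lt_mul_of_pos_right h hg₁
    rw [he₁, he₂] at this
    linarith
  -- key identity : K ξ * ξ^n = sfun ξ * ξ^(n-1)
  have key : ∀ ξ : ℝ, 0 ≤ ξ → K ξ * ξ ^ n = sfun ξ * ξ ^ (n - 1) := by
    intro ξ hξ
    obtain ⟨hs, he⟩ := hsfun ξ hξ
    have hgp := gpos _ hs
    rcases eq_or_lt_of_le hξ with h0 | h0
    · have hs0 : sfun ξ = 0 := by
        rcases mul_eq_zero.mp (he.trans h0.symm) with h | h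
        · exact h
        · exact absurd h hgp.ne'
      subst h0
      simp [hs0, Real.zero_rpow (show n ≠ 0 by linarith)]
    · have hrw : ξ ^ n = ξ * ξ ^ (n - 1) := by
        have h := Real.rpow_add h0 1 (n - 1)
        rw [show (1:ℝ) + (n - 1) = n by ring, Real.rpow_one] at h
        exact h
      rw [hK ξ hξ, hrw]
      field_simp
      linear_combination he.symm
  rw [key ξ₁ hξ₁, key ξ₂ hξ₂]
  have hpow : ξ₁ ^ (n - 1) ≤ ξ₂ ^ (n - 1) :=
    Real.rpow_le_rpow hξ₁ h12 (by linarith)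
  have hpnn : (0:ℝ) ≤ ξ₁ ^ (n - 1) := Real.rpow_nonneg hξ₁ _
  constructor
  · exact mul_nonneg hs₁ hpnn
  · exact mul_le_mul hsmono hpow hpnn hs₂
end

section
/- There exist positive constants $c_1, c_2$ (depending only on $g$) such that for all $\xi \ge 0$, $\dfrac{c_1}{(1+\xi)^a} \le K(\xi) \le \dfrac{c_2}{(1+\xi)^a}$, where $a=\alpha_N/(\alpha_N+1)$. -/
/-- There exist positive constants `c₁, c₂` such that for all `ξ ≥ 0`,
`c₁ / (1+ξ)^a ≤ K ξ ≤ c₂ / (1+ξ)^a`, where `a = α_N / (α_N + 1)`. -/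
theorem stmt4
    (N : ℕ) (hN : 1 ≤ N)
    (α : Fin (N + 1) → ℝ) (hα0 : α 0 = 0) (hαmono : StrictMono α)
    (c : Fin (N + 1) → ℝ) (hc : ∀ i, 0 ≤ c i) (hc0 : 0 < c 0) (hcN : 0 < c (Fin.last N))
    (g : ℝ → ℝ) (hg : ∀ s : ℝ, 0 ≤ s → g s = ∑ i, c i * s ^ (α i))
    (sfun : ℝ → ℝ)
    (hsfun : ∀ ξ : ℝ, 0 ≤ ξ → 0 ≤ sfun ξ ∧ sfun ξ * g (sfun ξ) = ξ)
    (K : ℝ → ℝ) (hK : ∀ ξ : ℝ, 0 ≤ ξ → K ξ = 1 / g (sfun ξ))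
    (a : ℝ) (ha : a = α (Fin.last N) / (α (Fin.last N) + 1)) :
    ∃ c₁ c₂ : ℝ, 0 < c₁ ∧ 0 < c₂ ∧ ∀ ξ : ℝ, 0 ≤ ξ →
      c₁ / (1 + ξ) ^ a ≤ K ξ ∧ K ξ ≤ c₂ / (1 + ξ) ^ a := by
  set A := α (Fin.last N) with hA
  have hlastpos : (0 : Fin (N + 1)) < Fin.last N := by
    rw [Fin.lt_iff_val_lt_val]
    simpa [Fin.last] using by omega
  have hApos : 0 < A := by
    have := hαmono hlastpos
    rwa [hα0] at this
  have hA1 : 0 < A + 1 := by linarith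
  have ha0 : 0 ≤ a := by rw [ha]; positivity
  have haA : (A + 1) * a = A := by rw [ha]; field_simp
  set C := ∑ i, c i with hC
  have hCge : c 0 ≤ C := Finset.single_le_sum (fun i _ => hc i) (Finset.mem_univ 0)
  have hCpos : 0 < C := lt_of_lt_of_le hc0 hCge
  have hαnn : ∀ i, 0 ≤ α i := fun i => hα0 ▸ hαmono.monotone (Fin.zero_le i)
  have hαle : ∀ i, α i ≤ A := fun i => hαmono.monotone (Fin.le_last i)
  -- bounds on g
  have hterm : ∀ (s : ℝ), 0 ≤ s → ∀ i : Fin (N + 1), 0 ≤ c i * s ^ (α i) := by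
    intro s hs i
    exact mul_nonneg (hc i) (Real.rpow_nonneg hs _)
  have hglow0 : ∀ s : ℝ, 0 ≤ s → c 0 ≤ g s := by
    intro s hs
    rw [hg s hs]
    have h0 : c 0 * s ^ (α 0) = c 0 := by rw [hα0, Real.rpow_zero, mul_one]
    calc c 0 = c 0 * s ^ (α 0) := h0.symm
      _ ≤ ∑ i, c i * s ^ (α i) :=
        Finset.single_le_sum (fun i _ => hterm s hs i) (Finset.mem_univ 0)
  have hglowN : ∀ s : ℝ, 0 ≤ s → c (Fin.last N) * s ^ A ≤ g s := by
    intro s hs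
    rw [hg s hs]
    exact Finset.single_le_sum (fun i _ => hterm s hs i) (Finset.mem_univ (Fin.last N))
  have hgup1 : ∀ s : ℝ, 0 ≤ s → s ≤ 1 → g s ≤ C := by
    intro s hs hs1
    rw [hg s hs, hC]
    refine Finset.sum_le_sum fun i _ => ?_
    have : s ^ (α i) ≤ 1 := Real.rpow_le_one hs hs1 (hαnn i)
    calc c i * s ^ (α i) ≤ c i * 1 := mul_le_mul_of_nonneg_left this (hc i)
      _ = c i := mul_one _
  have hgupA : ∀ s : ℝ, 1 ≤ s → g s ≤ C * s ^ A := by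
    intro s hs1
    have hs : (0:ℝ) ≤ s := le_trans zero_le_one hs1
    rw [hg s hs, hC, Finset.sum_mul]
    refine Finset.sum_le_sum fun i _ => ?_
    exact mul_le_mul_of_nonneg_left
      (Real.rpow_le_rpow_of_exponent_le hs1 (hαle i)) (hc i)
  -- constants
  set cN := c (Fin.last N) with hcNdef
  set M := C * (1 + cN⁻¹) ^ a with hM
  set m := min (c 0) cN / (1 + C) ^ a with hm
  have hCa_pos : (0:ℝ) < (1 + C) ^ a := Real.rpow_pos_of_pos (by linarith) a
  have hMpos : 0 < M := mul_pos hCpos (Real.rpow_pos_of_pos (by positivity) a)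
  have hmpos : 0 < m := div_pos (lt_min hc0 hcN) hCa_pos
  refine ⟨1 / M, 1 / m, by positivity, by positivity, fun ξ hξ => ?_⟩
  obtain ⟨hs0, hsg⟩ := hsfun ξ hξ
  set s := sfun ξ with hsdef
  set G := g s with hGdef
  have hGc0 : c 0 ≤ G := hglow0 s hs0
  have hGpos : 0 < G := lt_of_lt_of_le hc0 hGc0
  have hP1 : (1:ℝ) ≤ 1 + ξ := by linarith
  have hPpos : (0:ℝ) < (1 + ξ) ^ a := Real.rpow_pos_of_pos (by linarith) a
  have hPge1 : (1:ℝ) ≤ (1 + ξ) ^ a := Real.one_le_rpow hP1 ha0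
  -- main two-sided bound on G
  have hmain : m * (1 + ξ) ^ a ≤ G ∧ G ≤ M * (1 + ξ) ^ a := by
    rcases le_or_gt s 1 with hs1 | hs1
    · -- small s
      have hGC : G ≤ C := hgup1 s hs0 hs1
      have hξC : ξ ≤ C := by
        calc ξ = s * G := hsg.symm
          _ ≤ 1 * C := mul_le_mul hs1 hGC hGpos.le zero_le_one
          _ = C := one_mul C
      constructor
      · have h1 : (1 + ξ) ^ a ≤ (1 + C) ^ a :=
          Real.rpow_le_rpow (by linarith) (by linarith) ha0
        have : m * (1 + ξ) ^ a ≤ m * (1 + C) ^ a :=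
          mul_le_mul_of_nonneg_left h1 hmpos.le
        have h2 : m * (1 + C) ^ a = min (c 0) cN := by
          rw [hm, div_mul_cancel₀ _ (ne_of_gt hCa_pos)]
        calc m * (1 + ξ) ^ a ≤ m * (1 + C) ^ a := this
          _ = min (c 0) cN := h2
          _ ≤ c 0 := min_le_left _ _
          _ ≤ G := hGc0
      · have h1 : (1:ℝ) ≤ (1 + cN⁻¹) ^ a :=
          Real.one_le_rpow (by have := inv_nonneg.mpr hcN.le; linarith) ha0
        have h2 : (1:ℝ) ≤ (1 + cN⁻¹) ^ a * (1 + ξ) ^ a := by nlinarith [h1, hPge1]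
        calc G ≤ C := hGC
          _ = C * 1 := (mul_one C).symm
          _ ≤ C * ((1 + cN⁻¹) ^ a * (1 + ξ) ^ a) :=
            mul_le_mul_of_nonneg_left h2 hCpos.le
          _ = M * (1 + ξ) ^ a := by rw [hM]; ring
    · -- large s
      have hs1' : (1:ℝ) ≤ s := hs1.le
      have hspos : (0:ℝ) < s := lt_of_lt_of_le one_pos hs1'
      have hGA : cN * s ^ A ≤ G := hglowN s hs0
      have hGU : G ≤ C * s ^ A := hgupA s hs1'
      have hrA : s ^ (A + 1) = s ^ A * s := Real.rpow_add_one hspos.ne' A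
      have hsa : (s ^ (A + 1)) ^ a = s ^ A := by
        rw [← Real.rpow_mul hs0, haA]
      have hsA1_nonneg : (0:ℝ) ≤ s ^ (A + 1) := Real.rpow_nonneg hs0 _
      have hξlow : cN * s ^ (A + 1) ≤ ξ := by
        rw [hrA]
        calc cN * (s ^ A * s) = s * (cN * s ^ A) := by ring
          _ ≤ s * G := mul_le_mul_of_nonneg_left hGA hs0
          _ = ξ := hsg
      have hξhigh : ξ ≤ C * s ^ (A + 1) := by
        rw [hrA]
        calc ξ = s * G := hsg.symm
          _ ≤ s * (C * s ^ A) := mul_le_mul_of_nonneg_left hGU hs0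
          _ = C * (s ^ A * s) := by ring
      constructor
      · -- lower bound
        have hsA1_ge1 : (1:ℝ) ≤ s ^ (A + 1) := Real.one_le_rpow hs1' hA1.le
        have h1 : 1 + ξ ≤ (1 + C) * s ^ (A + 1) := by
          have : (1:ℝ) * 1 ≤ 1 * s ^ (A + 1) := by
            simpa using hsA1_ge1
          nlinarith
        have h2 : (1 + ξ) ^ a ≤ (1 + C) ^ a * s ^ A := by
          calc (1 + ξ) ^ a ≤ ((1 + C) * s ^ (A + 1)) ^ a :=
              Real.rpow_le_rpow (by linarith) h1 ha0
            _ = (1 + C) ^ a * (s ^ (A + 1)) ^ a :=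
              Real.mul_rpow (by linarith) hsA1_nonneg
            _ = (1 + C) ^ a * s ^ A := by rw [hsa]
        calc m * (1 + ξ) ^ a ≤ m * ((1 + C) ^ a * s ^ A) :=
            mul_le_mul_of_nonneg_left h2 hmpos.le
          _ = min (c 0) cN * s ^ A := by
            rw [hm]; field_simp
          _ ≤ cN * s ^ A :=
            mul_le_mul_of_nonneg_right (min_le_right _ _) (Real.rpow_nonneg hs0 _)
          _ ≤ G := hGA
      · -- upper bound
        have hdiv : s ^ (A + 1) ≤ ξ * cN⁻¹ := by
          rw [← div_eq_mul_inv, le_div_iff₀ hcN]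
          linarith [hξlow]
        have h1 : ξ * cN⁻¹ ≤ (1 + ξ) * (1 + cN⁻¹) := by
          have h2 : (0:ℝ) ≤ cN⁻¹ := inv_nonneg.mpr hcN.le
          have h5 : (1 + ξ) * (1 + cN⁻¹) = ξ * cN⁻¹ + (1 + ξ + cN⁻¹) := by ring
          linarith
        have h3 : s ^ A ≤ ((1 + ξ) * (1 + cN⁻¹)) ^ a := by
          rw [← hsa]
          exact Real.rpow_le_rpow hsA1_nonneg (le_trans hdiv h1) ha0
        have h4 : ((1 + ξ) * (1 + cN⁻¹)) ^ a = (1 + ξ) ^ a * (1 + cN⁻¹) ^ a :=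
          Real.mul_rpow (by linarith) (by positivity)
        calc G ≤ C * s ^ A := hGU
          _ ≤ C * ((1 + ξ) ^ a * (1 + cN⁻¹) ^ a) := by
            rw [← h4]; exact mul_le_mul_of_nonneg_left h3 hCpos.le
          _ = M * (1 + ξ) ^ a := by rw [hM]; ring
  obtain ⟨hlow, hup⟩ := hmain
  rw [hK ξ hξ, ← hsdef, ← hGdef]
  constructor
  · have h1 : 1 / (M * (1 + ξ) ^ a) ≤ 1 / G := one_div_le_one_div_of_le hGpos hup
    calc 1 / M / (1 + ξ) ^ a = 1 / (M * (1 + ξ) ^ a) := by rw [div_div]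
      _ ≤ 1 / G := h1
  · have hmP : 0 < m * (1 + ξ) ^ a := mul_pos hmpos hPpos
    have h1 : 1 / G ≤ 1 / (m * (1 + ξ) ^ a) := one_div_le_one_div_of_le hmP hlow
    calc 1 / G ≤ 1 / (m * (1 + ξ) ^ a) := h1
      _ = 1 / m / (1 + ξ) ^ a := by rw [div_div]
end

section
/- There exist positive constants $c_2, c_3$ (depending only on $g$) such that for every real number $n \ge 1$, every $\delta > 0$, and every $\xi \ge 0$, $c_3\left(\dfrac{\delta}{1+\delta}\right)^a\left(\xi^{n-a} - \delta^{n-a}\right) \le K(\xi)\,\xi^n \le c_2\,\xi^{n-a}$, where $a=\alpha_N/(\alpha_N+1)$. -/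
private lemma aux_mono_div (u v : ℝ) (hu : 0 ≤ u) (huv : u ≤ v) :
    u / (1 + u) ≤ v / (1 + v) := by
  rw [div_le_div_iff₀ (by linarith) (by linarith)]
  have h := mul_nonneg hu (sub_nonneg.2 huv)
  ring_nf
  nlinarith [h]

set_option maxHeartbeats 1000000 in
/-- There exist positive constants `c₂, c₃` such that for every real `n ≥ 1`, every `δ > 0`
and every `ξ ≥ 0`, `c₃ (δ/(1+δ))^a (ξ^(n-a) - δ^(n-a)) ≤ K ξ * ξ^n ≤ c₂ ξ^(n-a)`,
where `a = α_N / (α_N + 1)`. -/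
theorem stmt5
    (N : ℕ) (hN : 1 ≤ N)
    (α : Fin (N + 1) → ℝ) (hα0 : α 0 = 0) (hαmono : StrictMono α)
    (c : Fin (N + 1) → ℝ) (hc : ∀ i, 0 ≤ c i) (hc0 : 0 < c 0) (hcN : 0 < c (Fin.last N))
    (g : ℝ → ℝ) (hg : ∀ s : ℝ, 0 ≤ s → g s = ∑ i, c i * s ^ (α i))
    (sfun : ℝ → ℝ)
    (hsfun : ∀ ξ : ℝ, 0 ≤ ξ → 0 ≤ sfun ξ ∧ sfun ξ * g (sfun ξ) = ξ)
    (K : ℝ → ℝ) (hK : ∀ ξ : ℝ, 0 ≤ ξ → K ξ = 1 / g (sfun ξ))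
    (a : ℝ) (ha : a = α (Fin.last N) / (α (Fin.last N) + 1)) :
    ∃ c₂ c₃ : ℝ, 0 < c₂ ∧ 0 < c₃ ∧
      ∀ n : ℝ, 1 ≤ n → ∀ δ : ℝ, 0 < δ → ∀ ξ : ℝ, 0 ≤ ξ →
        c₃ * (δ / (1 + δ)) ^ a * (ξ ^ (n - a) - δ ^ (n - a)) ≤ K ξ * ξ ^ n ∧
        K ξ * ξ ^ n ≤ c₂ * ξ ^ (n - a) := by
  have hlastpos : (0 : Fin (N + 1)) < Fin.last N := by
    rw [Fin.lt_def]
    simp [Fin.last]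
    omega
  set A := α (Fin.last N) with hAdef
  have hA : 0 < A := by rw [← hα0]; exact hαmono hlastpos
  have hA1 : 0 < A + 1 := by linarith
  set b := 1 / (A + 1) with hbdef
  have hb : 0 < b := by positivity
  have ha_eq : A * b = a := by rw [ha, hbdef]; field_simp
  have ha_pos : 0 < a := by rw [ha]; positivity
  have ha_lt : a < 1 := by rw [ha, div_lt_one hA1]; linarith
  have hA1b : (A + 1) * b = 1 := by rw [hbdef]; field_simp
  set cN := c (Fin.last N) with hcNdef
  set C := 1 + ∑ i, c i with hCdef
  have hCsum : 0 ≤ ∑ i, c i := Finset.sum_nonneg fun i _ => hc i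
  have hC1 : 1 ≤ C := by rw [hCdef]; linarith
  have hC0 : 0 < C := by linarith
  clear_value A b cN C
  refine ⟨cN⁻¹ ^ b, C⁻¹ ^ b * (2 * C)⁻¹ ^ a,
    Real.rpow_pos_of_pos (inv_pos.2 hcN) b,
    mul_pos (Real.rpow_pos_of_pos (inv_pos.2 hC0) b)
      (Real.rpow_pos_of_pos (inv_pos.2 (by linarith)) a), ?_⟩
  intro n hn δ hδ ξ hξ
  have hna : 0 < n - a := by linarith
  obtain ⟨hs0, hsg⟩ := hsfun ξ hξ
  set s := sfun ξ with hsdef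
  clear_value s
  have hαnn : ∀ i, 0 ≤ α i := fun i => by rw [← hα0]; exact hαmono.monotone (Fin.zero_le i)
  have hαle : ∀ i, α i ≤ A := fun i => hAdef ▸ hαmono.monotone (Fin.le_last i)
  have hgs : g s = ∑ i, c i * s ^ α i := hg s hs0
  have h1 : c 0 ≤ g s := by
    rw [hgs]
    have := Finset.single_le_sum (f := fun i => c i * s ^ α i)
      (fun i _ => mul_nonneg (hc i) (Real.rpow_nonneg hs0 _)) (Finset.mem_univ 0)
    simpa [hα0] using this
  have hgpos : 0 < g s := lt_of_lt_of_le hc0 h1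
  have h2 : cN * s ^ A ≤ g s := by
    rw [hgs, hcNdef, hAdef]
    exact Finset.single_le_sum (f := fun i => c i * s ^ α i)
      (fun i _ => mul_nonneg (hc i) (Real.rpow_nonneg hs0 _)) (Finset.mem_univ (Fin.last N))
  have hs1 : (0 : ℝ) < 1 + s := by linarith
  have h3 : g s ≤ C * (1 + s) ^ A := by
    rw [hgs]
    have hone : (1 : ℝ) ≤ 1 + s := by linarith
    calc ∑ i, c i * s ^ α i ≤ ∑ i, c i * (1 + s) ^ A := by
          apply Finset.sum_le_sum
          intro i _
          apply mul_le_mul_of_nonneg_left _ (hc i)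
          calc s ^ α i ≤ (1 + s) ^ α i :=
                Real.rpow_le_rpow hs0 (by linarith) (hαnn i)
            _ ≤ (1 + s) ^ A := Real.rpow_le_rpow_of_exponent_le hone (hαle i)
      _ = (∑ i, c i) * (1 + s) ^ A := by rw [← Finset.sum_mul]
      _ ≤ C * (1 + s) ^ A := by
          apply mul_le_mul_of_nonneg_right _ (Real.rpow_nonneg hs1.le _)
          rw [hCdef]; linarith
  have hKv : K ξ = 1 / g s := by rw [hsdef]; exact hK ξ hξ
  rcases eq_or_lt_of_le hξ with hξ0 | hξpos
  · -- ξ = 0 case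
    have hn0 : ξ ^ n = 0 := by
      rw [← hξ0, Real.zero_rpow (by positivity : n ≠ 0)]
    have h0na : ξ ^ (n - a) = 0 := by
      rw [← hξ0, Real.zero_rpow (ne_of_gt hna)]
    constructor
    · rw [hn0, mul_zero]
      apply mul_nonpos_of_nonneg_of_nonpos
      · positivity
      · rw [h0na]
        simp only [zero_sub, neg_nonpos]
        exact Real.rpow_nonneg hδ.le _
    · rw [hn0, mul_zero, h0na, mul_zero]
  · -- ξ > 0 case
    have hspos : 0 < s := by
      rcases hs0.lt_or_eq with h | h
      · exact h
      · exfalso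
        rw [← h, zero_mul] at hsg
        linarith
    have hxiA : ξ ^ A = s ^ A * (g s) ^ A := by
      rw [← hsg, Real.mul_rpow hs0 hgpos.le]
    have hgA1 : (g s) ^ (A + 1) = (g s) ^ A * g s := by
      rw [Real.rpow_add hgpos, Real.rpow_one]
    -- Upper bound core: ξ^a ≤ cN⁻¹^b * g s
    have hup : ξ ^ a ≤ cN⁻¹ ^ b * g s := by
      have step : cN * ξ ^ A ≤ (g s) ^ (A + 1) := by
        rw [hxiA, hgA1]
        calc cN * (s ^ A * g s ^ A) = (cN * s ^ A) * g s ^ A := by ring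
          _ ≤ g s * g s ^ A := mul_le_mul_of_nonneg_right h2 (Real.rpow_nonneg hgpos.le A)
          _ = g s ^ A * g s := mul_comm _ _
      have step2 : ξ ^ A ≤ cN⁻¹ * (g s) ^ (A + 1) := by
        calc ξ ^ A = cN⁻¹ * (cN * ξ ^ A) := by field_simp
          _ ≤ cN⁻¹ * (g s) ^ (A + 1) := by
              apply mul_le_mul_of_nonneg_left step (inv_nonneg.2 hcN.le)
      have h5 := Real.rpow_le_rpow (Real.rpow_nonneg hξ A) step2 hb.le
      rw [← Real.rpow_mul hξ, ha_eq,
        Real.mul_rpow (inv_nonneg.2 hcN.le) (Real.rpow_nonneg hgpos.le _),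
        ← Real.rpow_mul hgpos.le, hA1b, Real.rpow_one] at h5
      exact h5
    -- Lower bound core: C⁻¹^b * (s/(1+s))^a * g s ≤ ξ^a
    have hdivnn : (0 : ℝ) ≤ s / (1 + s) := by positivity
    have hlowcore : C⁻¹ ^ b * (s / (1 + s)) ^ a * g s ≤ ξ ^ a := by
      have step : C⁻¹ * (s / (1 + s)) ^ A * (g s) ^ (A + 1) ≤ ξ ^ A := by
        rw [hxiA, hgA1, Real.div_rpow hs0 hs1.le]
        have hRpos : 0 < (1 + s) ^ A := Real.rpow_pos_of_pos hs1 A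
        calc C⁻¹ * (s ^ A / (1 + s) ^ A) * ((g s) ^ A * g s)
            ≤ C⁻¹ * (s ^ A / (1 + s) ^ A) * ((g s) ^ A * (C * (1 + s) ^ A)) := by
              apply mul_le_mul_of_nonneg_left _ (by positivity)
              exact mul_le_mul_of_nonneg_left h3 (Real.rpow_nonneg hgpos.le _)
          _ = s ^ A * (g s) ^ A := by
              field_simp
      have h5 := Real.rpow_le_rpow (by positivity) step hb.le
      rw [← Real.rpow_mul hξ, ha_eq,
        Real.mul_rpow (by positivity) (Real.rpow_nonneg hgpos.le _),
        Real.mul_rpow (inv_nonneg.2 hC0.le) (Real.rpow_nonneg hdivnn _),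
        ← Real.rpow_mul hdivnn, ha_eq,
        ← Real.rpow_mul hgpos.le, hA1b, Real.rpow_one] at h5
      exact h5
    have hxina : ξ ^ n = ξ ^ (n - a) * ξ ^ a := by
      have hnn : n - a + a = n := by ring
      rw [← Real.rpow_add hξpos, hnn]
    constructor
    · -- Lower bound
      rcases le_total ξ δ with hcase | hcase
      · have h6 : ξ ^ (n - a) ≤ δ ^ (n - a) := Real.rpow_le_rpow hξ hcase hna.le
        have h7 : 0 ≤ K ξ * ξ ^ n := by
          rw [hKv]
          positivity
        have h8 : C⁻¹ ^ b * (2 * C)⁻¹ ^ a * (δ / (1 + δ)) ^ a * (ξ ^ (n - a) - δ ^ (n - a)) ≤ 0 :=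
          mul_nonpos_of_nonneg_of_nonpos (by positivity) (by linarith)
        linarith
      · -- δ ≤ ξ
        have hδ1 : (0 : ℝ) < 1 + δ := by linarith
        have hratio : (2 * C)⁻¹ * (δ / (1 + δ)) ≤ s / (1 + s) := by
          rcases le_total 1 s with hs1' | hs1'
          · have e1 : δ / (1 + δ) ≤ 1 := by rw [div_le_one hδ1]; linarith
            have e2 : (2 * C)⁻¹ * (δ / (1 + δ)) ≤ (2 * C)⁻¹ * 1 :=
              mul_le_mul_of_nonneg_left e1 (by positivity)
            have e3 : (2 * C)⁻¹ ≤ 1 / 2 := by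
              rw [inv_le_comm₀ (by linarith) (by norm_num)]
              linarith
            have e4 : (1 : ℝ) / 2 ≤ s / (1 + s) := by
              rw [div_le_div_iff₀ (by norm_num) hs1]
              linarith
            linarith
          · have hgsC : g s ≤ C := by
              rw [hgs, hCdef]
              have : ∑ i, c i * s ^ α i ≤ ∑ i, c i := by
                apply Finset.sum_le_sum
                intro i _
                calc c i * s ^ α i ≤ c i * 1 :=
                      mul_le_mul_of_nonneg_left (Real.rpow_le_one hs0 hs1' (hαnn i)) (hc i)
                  _ = c i := mul_one _
              linarith
            have hsδC : δ / C ≤ s := by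
              rw [div_le_iff₀ hC0]
              calc δ ≤ ξ := hcase
                _ = s * g s := hsg.symm
                _ ≤ s * C := mul_le_mul_of_nonneg_left hgsC hs0
            have hmono := aux_mono_div (δ / C) s (by positivity) hsδC
            have heq : (δ / C) / (1 + δ / C) = δ / (C + δ) := by
              rw [div_div]
              congr 1
              field_simp
            have hfin : (2 * C)⁻¹ * (δ / (1 + δ)) ≤ δ / (C + δ) := by
              have e5 : (2 * C)⁻¹ * (δ / (1 + δ)) = δ / (2 * C * (1 + δ)) := by
                field_simp
              rw [e5, div_le_div_iff₀ (by positivity) (by positivity)]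
              have h := mul_nonneg (sub_nonneg.2 hC1) hδ.le
              apply mul_le_mul_of_nonneg_left _ hδ.le
              linarith [h]
            rw [heq] at hmono
            linarith
        have hr_a : ((2 * C)⁻¹ * (δ / (1 + δ))) ^ a ≤ (s / (1 + s)) ^ a :=
          Real.rpow_le_rpow (by positivity) hratio ha_pos.le
        rw [Real.mul_rpow (by positivity) (by positivity)] at hr_a
        have hmain : C⁻¹ ^ b * (2 * C)⁻¹ ^ a * (δ / (1 + δ)) ^ a * g s ≤ ξ ^ a := by
          calc C⁻¹ ^ b * (2 * C)⁻¹ ^ a * (δ / (1 + δ)) ^ a * g s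
              = C⁻¹ ^ b * ((2 * C)⁻¹ ^ a * (δ / (1 + δ)) ^ a) * g s := by ring
            _ ≤ C⁻¹ ^ b * (s / (1 + s)) ^ a * g s := by
                apply mul_le_mul_of_nonneg_right _ hgpos.le
                exact mul_le_mul_of_nonneg_left hr_a (Real.rpow_nonneg (by positivity) _)
            _ ≤ ξ ^ a := hlowcore
        have h8 : C⁻¹ ^ b * (2 * C)⁻¹ ^ a * (δ / (1 + δ)) ^ a ≤ ξ ^ a / g s :=
          (le_div_iff₀ hgpos).2 hmain
        have h9 := mul_le_mul_of_nonneg_right h8 (Real.rpow_nonneg hξ (n - a))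
        have h10 : ξ ^ a / g s * ξ ^ (n - a) = K ξ * ξ ^ n := by
          rw [hKv, hxina]
          ring
        have h11 : ξ ^ (n - a) - δ ^ (n - a) ≤ ξ ^ (n - a) := by
          have : 0 ≤ δ ^ (n - a) := Real.rpow_nonneg hδ.le _
          linarith
        calc C⁻¹ ^ b * (2 * C)⁻¹ ^ a * (δ / (1 + δ)) ^ a * (ξ ^ (n - a) - δ ^ (n - a))
            ≤ C⁻¹ ^ b * (2 * C)⁻¹ ^ a * (δ / (1 + δ)) ^ a * ξ ^ (n - a) :=
              mul_le_mul_of_nonneg_left h11 (by positivity)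
          _ ≤ ξ ^ a / g s * ξ ^ (n - a) := h9
          _ = K ξ * ξ ^ n := h10
    · -- Upper bound
      rw [hKv, hxina]
      have h12 : ξ ^ a / g s ≤ cN⁻¹ ^ b := (div_le_iff₀ hgpos).2 (by linarith [hup])
      calc 1 / g s * (ξ ^ (n - a) * ξ ^ a) = ξ ^ a / g s * ξ ^ (n - a) := by ring
        _ ≤ cN⁻¹ ^ b * ξ ^ (n - a) :=
            mul_le_mul_of_nonneg_right h12 (Real.rpow_nonneg hξ _)
end

section
/- The function $K$ is differentiable on $(0,\infty)$, and for every $\xi > 0$ its derivative satisfies $-a\,K(\xi) \le K'(\xi)\,\xi \le 0$, where $a=\alpha_N/(\alpha_N+1)$. -/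
/-- `K` is differentiable on `(0,∞)` and for every `ξ > 0`,
`-a K(ξ) ≤ K'(ξ) ξ ≤ 0`, where `a = α_N / (α_N + 1)`. -/
theorem stmt6
    (N : ℕ) (hN : 1 ≤ N)
    (α : Fin (N + 1) → ℝ) (hα0 : α 0 = 0) (hαmono : StrictMono α)
    (c : Fin (N + 1) → ℝ) (hc : ∀ i, 0 ≤ c i) (hc0 : 0 < c 0) (hcN : 0 < c (Fin.last N))
    (g : ℝ → ℝ) (hg : ∀ s : ℝ, 0 ≤ s → g s = ∑ i, c i * s ^ (α i))
    (sfun : ℝ → ℝ)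
    (hsfun : ∀ ξ : ℝ, 0 ≤ ξ → 0 ≤ sfun ξ ∧ sfun ξ * g (sfun ξ) = ξ)
    (K : ℝ → ℝ) (hK : ∀ ξ : ℝ, 0 ≤ ξ → K ξ = 1 / g (sfun ξ))
    (a : ℝ) (ha : a = α (Fin.last N) / (α (Fin.last N) + 1)) :
    (∀ ξ : ℝ, 0 < ξ → DifferentiableAt ℝ K ξ) ∧
    (∀ ξ : ℝ, 0 < ξ → -(a * K ξ) ≤ deriv K ξ * ξ ∧ deriv K ξ * ξ ≤ 0) := by
  set αN := α (Fin.last N) with hαNdef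
  have h0last : (0 : Fin (N + 1)) < Fin.last N := by
    rw [Fin.lt_iff_val_lt_val]; simp [Fin.last]; omega
  have hαN : 0 < αN := hα0 ▸ hαmono h0last
  have hαnn : ∀ i, 0 ≤ α i := fun i => hα0 ▸ hαmono.monotone (Fin.zero_le i)
  have hαle : ∀ i, α i ≤ αN := fun i => hαmono.monotone (Fin.le_last i)
  -- the function F s = s * g s and its sum representation
  set F : ℝ → ℝ := fun s => s * g s with hFdef
  have hFsum : ∀ s : ℝ, 0 ≤ s → F s = ∑ i, c i * s ^ (α i + 1) := by
    intro s hs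
    rcases eq_or_lt_of_le hs with h | h
    · rw [← h]
      show (0:ℝ) * g 0 = _
      rw [zero_mul]
      symm
      apply Finset.sum_eq_zero
      intro i _
      rw [Real.zero_rpow (by nlinarith [hαnn i])]
      ring
    · show s * g s = _
      rw [hg s hs, Finset.mul_sum]
      refine Finset.sum_congr rfl fun i _ => ?_
      rw [Real.rpow_add_one h.ne']; ring
  have hFmono : StrictMonoOn F (Set.Ici (0:ℝ)) := by
    intro s hs t ht hst
    rw [hFsum s hs, hFsum t ht]
    refine Finset.sum_lt_sum (fun i _ => ?_) ⟨0, Finset.mem_univ _, ?_⟩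
    · exact mul_le_mul_of_nonneg_left
        (Real.rpow_le_rpow hs hst.le (by nlinarith [hαnn i])) (hc i)
    · rw [hα0, zero_add, Real.rpow_one, Real.rpow_one]
      exact (mul_lt_mul_iff_right₀ hc0).2 hst
  -- key: pointwise data at each ξ > 0
  have key : ∀ ξ : ℝ, 0 < ξ → ∃ G D : ℝ, 0 < G ∧ 0 ≤ D ∧ D ≤ αN * G ∧
      K ξ = 1 / G ∧ HasDerivAt K (-(D / ((G + D) * G * ξ))) ξ := by
    intro ξ hξ
    obtain ⟨hs₀, hFs₀⟩ := hsfun ξ hξ.le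
    set s₀ := sfun ξ with hs₀def
    have hs₀pos : 0 < s₀ := by
      rcases eq_or_lt_of_le hs₀ with h | h
      · exfalso; rw [← h, zero_mul] at hFs₀; linarith
      · exact h
    set G : ℝ := ∑ i, c i * s₀ ^ (α i) with hGdef
    set D : ℝ := ∑ i, c i * α i * s₀ ^ (α i) with hDdef
    have hterm : ∀ i : Fin (N+1), 0 < s₀ ^ (α i) := fun i => Real.rpow_pos_of_pos hs₀pos _
    have hGpos : 0 < G := by
      refine Finset.sum_pos' (fun i _ => mul_nonneg (hc i) (hterm i).le)
        ⟨Fin.last N, Finset.mem_univ _, mul_pos hcN (hterm _)⟩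
    have hDnn : 0 ≤ D := Finset.sum_nonneg fun i _ =>
      mul_nonneg (mul_nonneg (hc i) (hαnn i)) (hterm i).le
    have hDle : D ≤ αN * G := by
      rw [hGdef, Finset.mul_sum]
      refine Finset.sum_le_sum fun i _ => ?_
      have := mul_le_mul_of_nonneg_right (mul_le_mul_of_nonneg_left (hαle i) (hc i)) (hterm i).le
      nlinarith [this]
    have hgG : g s₀ = G := hg s₀ hs₀ ▸ rfl
    have hξeq : ξ = s₀ * G := by rw [← hFs₀, hgG]
    -- strict derivative of F at s₀
    set H : ℝ → ℝ := fun s => ∑ i, c i * s ^ (α i + 1) with hHdef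
    have hH : HasStrictDerivAt H (G + D) s₀ := by
      have h1 : HasStrictDerivAt H (∑ i, c i * ((α i + 1) * s₀ ^ (α i + 1 - 1))) s₀ := by
        apply HasStrictDerivAt.fun_sum
        intro i _
        exact (Real.hasStrictDerivAt_rpow_const (p := α i + 1) (Or.inl hs₀pos.ne')).const_mul (c i)
      convert h1 using 1
      rw [hGdef, hDdef, ← Finset.sum_add_distrib]
      refine Finset.sum_congr rfl fun i _ => ?_
      rw [add_sub_cancel_right]; ring
    have hFH : F =ᶠ[nhds s₀] H :=
      (eventually_gt_nhds hs₀pos).mono fun s hs' => hFsum s hs'.le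
    have hF' : HasStrictDerivAt F (G + D) s₀ := hH.congr_of_eventuallyEq hFH.symm
    have hHv : (G + D) ≠ 0 := by positivity
    have hFs₀' : F s₀ = ξ := hFs₀
    -- local inverse
    set φ := hF'.localInverse F (G + D) s₀ hHv with hφdef
    have hφd : HasStrictDerivAt φ (G + D)⁻¹ ξ := by
      have := hF'.to_localInverse (hf' := hHv)
      rwa [hFs₀'] at this
    have hEq : sfun =ᶠ[nhds ξ] φ := by
      have h1 : ∀ᶠ y in nhds ξ, F (φ y) = y := by
        have := (hF'.hasStrictFDerivAt_equiv hHv).eventually_right_inverse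
        rwa [hFs₀'] at this
      have hφcont : ContinuousAt φ ξ := by
        have := (hF'.hasStrictFDerivAt_equiv hHv).localInverse_continuousAt
        rwa [hFs₀'] at this
      have hφξ : φ ξ = s₀ := by
        have := (hF'.hasStrictFDerivAt_equiv hHv).localInverse_apply_image
        rwa [hFs₀'] at this
      have h2 : ∀ᶠ y in nhds ξ, 0 < φ y :=
        hφcont.eventually (by rw [hφξ]; exact eventually_gt_nhds hs₀pos)
      have h3 : ∀ᶠ y in nhds ξ, 0 < y := eventually_gt_nhds hξ
      filter_upwards [h1, h2, h3] with y hy1 hy2 hy3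
      obtain ⟨hsy, hFy⟩ := hsfun y hy3.le
      exact hFmono.injOn hsy (le_of_lt hy2) ((hFy.trans hy1.symm) : F (sfun y) = F (φ y))
    have hsd : HasDerivAt sfun (G + D)⁻¹ ξ :=
      hφd.hasDerivAt.congr_of_eventuallyEq hEq
    -- K agrees with sfun y / y near ξ
    have hKev : K =ᶠ[nhds ξ] fun y => sfun y / y := by
      filter_upwards [eventually_gt_nhds hξ] with y hy
      obtain ⟨hsy, hFy⟩ := hsfun y hy.le
      have hsy' : 0 < sfun y := by
        rcases eq_or_lt_of_le hsy with h | h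
        · exfalso; rw [← h, zero_mul] at hFy; linarith
        · exact h
      have hgy : g (sfun y) = y / sfun y := by
        field_simp at hFy ⊢; linarith [hFy]
      rw [hK y hy.le, hgy, one_div_div]
    have hKd : HasDerivAt K (((G + D)⁻¹ * ξ - s₀ * 1) / ξ ^ 2) ξ := by
      have := (hsd.div (hasDerivAt_id ξ) hξ.ne')
      simp only [id] at this
      exact this.congr_of_eventuallyEq hKev
    refine ⟨G, D, hGpos, hDnn, hDle, ?_, ?_⟩
    · rw [hK ξ hξ.le, hgG]
    · convert hKd using 1
      rw [hξeq]
      have hGD : 0 < G + D := by positivity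
      field_simp
      ring
  constructor
  · intro ξ hξ
    obtain ⟨G, D, _, _, _, _, hd⟩ := key ξ hξ
    exact hd.differentiableAt
  · intro ξ hξ
    obtain ⟨G, D, hG, hD, hDle, hKξ, hd⟩ := key ξ hξ
    have hderiv : deriv K ξ = -(D / ((G + D) * G * ξ)) := hd.deriv
    have hGD : 0 < G + D := by positivity
    have hmul : deriv K ξ * ξ = -(D / ((G + D) * G)) := by
      rw [hderiv]; field_simp
    constructor
    · rw [hmul, hKξ, ha, neg_le_neg_iff, div_mul_div_comm, mul_one]
      rw [div_le_div_iff₀ (by positivity) (by positivity)]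
      nlinarith [mul_le_mul_of_nonneg_right hDle hG.le, hG, hD, hαN]
    · rw [hmul]
      simp only [neg_nonpos]
      positivity
end

section
/- Define $H(\xi) = \int_0^{\xi^2} K(\sqrt{s})\,ds$ for $\xi \ge 0$. Then for all $\xi \ge 0$, $K(\xi)\,\xi^2 \le H(\xi) \le 2\,K(\xi)\,\xi^2$. -/
/-- With `H(ξ) = ∫_0^{ξ²} K(√s) ds` for `ξ ≥ 0`, one has
`K(ξ) ξ² ≤ H(ξ) ≤ 2 K(ξ) ξ²` for all `ξ ≥ 0`. -/
theorem stmt7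
    (N : ℕ) (hN : 1 ≤ N)
    (α : Fin (N + 1) → ℝ) (hα0 : α 0 = 0) (hαmono : StrictMono α)
    (c : Fin (N + 1) → ℝ) (hc : ∀ i, 0 ≤ c i) (hc0 : 0 < c 0) (hcN : 0 < c (Fin.last N))
    (g : ℝ → ℝ) (hg : ∀ s : ℝ, 0 ≤ s → g s = ∑ i, c i * s ^ (α i))
    (sfun : ℝ → ℝ)
    (hsfun : ∀ ξ : ℝ, 0 ≤ ξ → 0 ≤ sfun ξ ∧ sfun ξ * g (sfun ξ) = ξ)
    (K : ℝ → ℝ) (hK : ∀ ξ : ℝ, 0 ≤ ξ → K ξ = 1 / g (sfun ξ))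
    (H : ℝ → ℝ) (hH : ∀ ξ : ℝ, 0 ≤ ξ → H ξ = ∫ t in (0:ℝ)..(ξ ^ 2), K (Real.sqrt t)) :
    ∀ ξ : ℝ, 0 ≤ ξ → K ξ * ξ ^ 2 ≤ H ξ ∧ H ξ ≤ 2 * (K ξ * ξ ^ 2) := by
  have hα_nonneg : ∀ i, 0 ≤ α i := fun i => hα0 ▸ hαmono.monotone (Fin.zero_le i)
  have hg_ge : ∀ s : ℝ, 0 ≤ s → c 0 ≤ g s := by
    intro s hs
    rw [hg s hs]
    calc c 0 = c 0 * s ^ (α 0) := by rw [hα0, Real.rpow_zero, mul_one]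
    _ ≤ ∑ i, c i * s ^ (α i) := Finset.single_le_sum
        (fun i _ => mul_nonneg (hc i) (Real.rpow_nonneg hs _)) (Finset.mem_univ 0)
  have hg_pos : ∀ s : ℝ, 0 ≤ s → 0 < g s := fun s hs => lt_of_lt_of_le hc0 (hg_ge s hs)
  have hg_mono : ∀ s1 s2 : ℝ, 0 ≤ s1 → s1 ≤ s2 → g s1 ≤ g s2 := by
    intro s1 s2 h1 h12
    rw [hg s1 h1, hg s2 (h1.trans h12)]
    exact Finset.sum_le_sum fun i _ =>
      mul_le_mul_of_nonneg_left (Real.rpow_le_rpow h1 h12 (hα_nonneg i)) (hc i)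
  have hs_nonneg : ∀ ξ : ℝ, 0 ≤ ξ → 0 ≤ sfun ξ := fun ξ hξ => (hsfun ξ hξ).1
  have hs_eq : ∀ ξ : ℝ, 0 ≤ ξ → sfun ξ * g (sfun ξ) = ξ := fun ξ hξ => (hsfun ξ hξ).2
  have hs_mono : ∀ ξ1 ξ2 : ℝ, 0 ≤ ξ1 → ξ1 ≤ ξ2 → sfun ξ1 ≤ sfun ξ2 := by
    intro ξ1 ξ2 h1 h12
    by_contra h
    push_neg at h
    have h2 : (0:ℝ) ≤ ξ2 := h1.trans h12
    have : ξ2 < ξ1 := by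
      calc ξ2 = sfun ξ2 * g (sfun ξ2) := (hs_eq ξ2 h2).symm
      _ ≤ sfun ξ2 * g (sfun ξ1) :=
          mul_le_mul_of_nonneg_left (hg_mono _ _ (hs_nonneg ξ2 h2) h.le) (hs_nonneg ξ2 h2)
      _ < sfun ξ1 * g (sfun ξ1) := mul_lt_mul_of_pos_right h (hg_pos _ (hs_nonneg ξ1 h1))
      _ = ξ1 := hs_eq ξ1 h1
    linarith
  have hK_pos : ∀ ξ : ℝ, 0 ≤ ξ → 0 < K ξ := by
    intro ξ hξ
    rw [hK ξ hξ]
    exact one_div_pos.mpr (hg_pos _ (hs_nonneg ξ hξ))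
  have hK_anti : ∀ ξ1 ξ2 : ℝ, 0 ≤ ξ1 → ξ1 ≤ ξ2 → K ξ2 ≤ K ξ1 := by
    intro ξ1 ξ2 h1 h12
    rw [hK ξ1 h1, hK ξ2 (h1.trans h12)]
    exact one_div_le_one_div_of_le (hg_pos _ (hs_nonneg ξ1 h1))
      (hg_mono _ _ (hs_nonneg ξ1 h1) (hs_mono ξ1 ξ2 h1 h12))
  -- K ξ * ξ = sfun ξ
  have hKs : ∀ ξ : ℝ, 0 ≤ ξ → K ξ * ξ = sfun ξ := by
    intro ξ hξ
    have hgne : g (sfun ξ) ≠ 0 := (hg_pos _ (hs_nonneg ξ hξ)).ne'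
    rw [hK ξ hξ]
    field_simp
    linarith [hs_eq ξ hξ]
  intro ξ hξ
  have hξ2 : (0:ℝ) ≤ ξ ^ 2 := sq_nonneg ξ
  have hsqt : ∀ t ∈ Set.Icc (0:ℝ) (ξ ^ 2), Real.sqrt t ≤ ξ := by
    intro t ht
    calc Real.sqrt t ≤ Real.sqrt (ξ ^ 2) := Real.sqrt_le_sqrt ht.2
    _ = ξ := Real.sqrt_sq hξ
  -- integrability of t ↦ K (√t)
  have hanti : AntitoneOn (fun t => K (Real.sqrt t)) (Set.uIcc (0:ℝ) (ξ ^ 2)) := by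
    rw [Set.uIcc_of_le hξ2]
    intro x hx y hy hxy
    exact hK_anti _ _ (Real.sqrt_nonneg x) (Real.sqrt_le_sqrt hxy)
  have hint1 : IntervalIntegrable (fun t => K (Real.sqrt t)) MeasureTheory.volume 0 (ξ ^ 2) :=
    hanti.intervalIntegrable
  constructor
  · -- lower bound
    rw [hH ξ hξ]
    have hmono := intervalIntegral.integral_mono_on hξ2
      (intervalIntegrable_const (c := K ξ)) hint1
      (fun t ht => hK_anti _ _ (Real.sqrt_nonneg t) (hsqt t ht))
    simpa [mul_comm] using hmono
  · -- upper bound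
    rw [hH ξ hξ]
    have hint2 : IntervalIntegrable (fun t : ℝ => sfun ξ * t ^ (-(1/2) : ℝ))
        MeasureTheory.volume 0 (ξ ^ 2) :=
      (intervalIntegral.intervalIntegrable_rpow' (by norm_num)).const_mul _
    have hae : (fun t => K (Real.sqrt t)) ≤ᵐ[MeasureTheory.volume.restrict
        (Set.Icc (0:ℝ) (ξ ^ 2))] fun t : ℝ => sfun ξ * t ^ (-(1/2) : ℝ) := by
      have h0 : ∀ᵐ t ∂(MeasureTheory.volume.restrict (Set.Icc (0:ℝ) (ξ ^ 2))), t ≠ 0 :=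
        MeasureTheory.ae_restrict_of_ae (by
          have : MeasureTheory.volume ({(0:ℝ)}) = 0 := Real.volume_singleton
          exact MeasureTheory.measure_mono_null (fun x hx => by simpa using hx) this)
      have hmem : ∀ᵐ t ∂(MeasureTheory.volume.restrict (Set.Icc (0:ℝ) (ξ ^ 2))),
          t ∈ Set.Icc (0:ℝ) (ξ ^ 2) :=
        MeasureTheory.ae_restrict_mem measurableSet_Icc
      filter_upwards [h0, hmem] with t ht0 htm
      have htpos : 0 < t := lt_of_le_of_ne htm.1 (Ne.symm ht0)
      have hst : 0 < Real.sqrt t := Real.sqrt_pos.mpr htpos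
      have hstle : Real.sqrt t ≤ ξ := hsqt t htm
      have h1 : K (Real.sqrt t) * Real.sqrt t = sfun (Real.sqrt t) := hKs _ hst.le
      have h2 : sfun (Real.sqrt t) ≤ sfun ξ := hs_mono _ _ hst.le hstle
      have h3 : t ^ (-(1/2) : ℝ) = (Real.sqrt t)⁻¹ := by
        rw [Real.rpow_neg htpos.le, ← Real.sqrt_eq_rpow]
      show K (Real.sqrt t) ≤ sfun ξ * t ^ (-(1/2) : ℝ)
      rw [h3]
      calc K (Real.sqrt t) = K (Real.sqrt t) * Real.sqrt t * (Real.sqrt t)⁻¹ := by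
            field_simp
      _ ≤ sfun ξ * (Real.sqrt t)⁻¹ := by
            apply mul_le_mul_of_nonneg_right _ (inv_nonneg.mpr hst.le)
            rw [h1]; exact h2
    have hle := intervalIntegral.integral_mono_ae_restrict hξ2 hint1 hint2 hae
    have hval : (∫ t in (0:ℝ)..(ξ ^ 2), sfun ξ * t ^ (-(1/2) : ℝ)) = 2 * (K ξ * ξ ^ 2) := by
      rw [intervalIntegral.integral_const_mul, integral_rpow (Or.inl (by norm_num))]
      have : (-(1/2) : ℝ) + 1 = 1/2 := by norm_num
      rw [this]
      have h0 : (0:ℝ) ^ ((1:ℝ)/2) = 0 := Real.zero_rpow (by norm_num)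
      have hx : ((ξ:ℝ) ^ 2) ^ ((1:ℝ)/2) = ξ := by
        rw [← Real.sqrt_eq_rpow, Real.sqrt_sq hξ]
      rw [h0, hx]
      have := hKs ξ hξ
      nlinarith [hKs ξ hξ]
    linarith [hval ▸ hle]
end

section
/- For every dimension $d \ge 1$ and all vectors $y, y' \in \mathbb{R}^d$, $\big(K(|y'|)\,y' - K(|y|)\,y\big)\cdot(y'-y) \ge (\beta-1)\,K\big(\max\{|y|,|y'|\}\big)\,|y'-y|^2$, where $\beta = 2 - a$ and $a=\alpha_N/(\alpha_N+1)$. -/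
open RealInnerProductSpace

lemma aux_rpow (q s s' : ℝ) (hq : 0 ≤ q) (hs : 0 ≤ s) (hss' : s ≤ s') :
    s' ^ (1 + q) - s ^ (1 + q) ≤ (1 + q) * (s' ^ q * (s' - s)) := by
  have hs' : 0 ≤ s' := hs.trans hss'
  rcases eq_or_lt_of_le hs' with h0 | h0
  · have hs0 : s = 0 := le_antisymm (hss'.trans h0.ge) hs
    rw [← h0, hs0, Real.zero_rpow (by positivity)]
    simp
  · have hu : (-1 : ℝ) ≤ s / s' - 1 := by
      have : 0 ≤ s / s' := div_nonneg hs hs'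
      linarith
    have hb := one_add_mul_self_le_rpow_one_add hu (by linarith : (1:ℝ) ≤ 1 + q)
    have he : (1 : ℝ) + (s / s' - 1) = s / s' := by ring
    rw [he] at hb
    have hpos : 0 < s' ^ (1 + q) := Real.rpow_pos_of_pos h0 _
    have hmul := mul_le_mul_of_nonneg_right hb hpos.le
    have hdiv : (s / s') ^ (1 + q) * s' ^ (1 + q) = s ^ (1 + q) := by
      rw [Real.div_rpow hs hs', div_mul_cancel₀]
      exact hpos.ne'
    rw [hdiv] at hmul
    have hsp : s' ^ (1 + q) = s' * s' ^ q := Real.rpow_one_add' hs' (by positivity)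
    have hs'ne : s' ≠ 0 := h0.ne'
    have : (1 + (1 + q) * (s / s' - 1)) * s' ^ (1 + q)
        = s' ^ (1 + q) + (1 + q) * (s' ^ q * (s - s')) := by
      rw [hsp]; field_simp
    rw [this] at hmul
    nlinarith

/-- Monotonicity: for every dimension `d ≥ 1` and all `y, y' ∈ ℝ^d`,
`(K(|y'|) y' - K(|y|) y) ⬝ (y' - y) ≥ (β - 1) K(max{|y|,|y'|}) |y' - y|²`,
where `β = 2 - a` and `a = α_N / (α_N + 1)`. -/
theorem stmt8
    (N : ℕ) (hN : 1 ≤ N)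
    (α : Fin (N + 1) → ℝ) (hα0 : α 0 = 0) (hαmono : StrictMono α)
    (c : Fin (N + 1) → ℝ) (hc : ∀ i, 0 ≤ c i) (hc0 : 0 < c 0) (hcN : 0 < c (Fin.last N))
    (g : ℝ → ℝ) (hg : ∀ s : ℝ, 0 ≤ s → g s = ∑ i, c i * s ^ (α i))
    (sfun : ℝ → ℝ)
    (hsfun : ∀ ξ : ℝ, 0 ≤ ξ → 0 ≤ sfun ξ ∧ sfun ξ * g (sfun ξ) = ξ)
    (K : ℝ → ℝ) (hK : ∀ ξ : ℝ, 0 ≤ ξ → K ξ = 1 / g (sfun ξ))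
    (a : ℝ) (ha : a = α (Fin.last N) / (α (Fin.last N) + 1))
    (β : ℝ) (hβ : β = 2 - a) :
    ∀ d : ℕ, 1 ≤ d → ∀ y y' : EuclideanSpace ℝ (Fin d),
      (β - 1) * K (max ‖y‖ ‖y'‖) * ‖y' - y‖ ^ 2 ≤
        ⟪K ‖y'‖ • y' - K ‖y‖ • y, y' - y⟫ := by
  -- basic facts about the exponents
  have hα_nonneg : ∀ i, 0 ≤ α i := fun i => hα0 ▸ hαmono.monotone (Fin.zero_le i)
  have hlastpos : (0 : Fin (N + 1)) < Fin.last N := by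
    rw [Fin.lt_iff_val_lt_val]
    simp; omega
  have hαN : 0 < α (Fin.last N) := hα0 ▸ hαmono hlastpos
  set A : ℝ := α (Fin.last N) + 1 with hA
  have hApos : 0 < A := by positivity
  have ha_eq : 1 - a = 1 / A := by
    rw [ha]; field_simp; rw [hA]; ring
  have ha0 : 0 ≤ a := by rw [ha]; positivity
  have h1a : 0 < 1 - a := by rw [ha_eq]; positivity
  -- positivity and monotonicity of g
  have hgpos : ∀ s : ℝ, 0 ≤ s → 0 < g s := by
    intro s hs
    rw [hg s hs]
    have h0 : c 0 * s ^ (α 0) = c 0 := by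
      rw [hα0, Real.rpow_zero, mul_one]
    calc (0:ℝ) < c 0 := hc0
      _ = c 0 * s ^ (α 0) := h0.symm
      _ ≤ ∑ i, c i * s ^ (α i) := by
          apply Finset.single_le_sum (f := fun i => c i * s ^ (α i))
            (fun i _ => mul_nonneg (hc i) (Real.rpow_nonneg hs _)) (Finset.mem_univ 0)
  have hgmono : ∀ s s' : ℝ, 0 ≤ s → s ≤ s' → g s ≤ g s' := by
    intro s s' hs hss'
    rw [hg s hs, hg s' (hs.trans hss')]
    apply Finset.sum_le_sum
    intro i _
    exact mul_le_mul_of_nonneg_left (Real.rpow_le_rpow hs hss' (hα_nonneg i)) (hc i)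
  -- monotonicity of sfun
  have hsmono : ∀ ξ ξ' : ℝ, 0 ≤ ξ → ξ ≤ ξ' → sfun ξ ≤ sfun ξ' := by
    intro ξ ξ' hξ hξξ'
    obtain ⟨hs, hsg⟩ := hsfun ξ hξ
    obtain ⟨hs', hsg'⟩ := hsfun ξ' (hξ.trans hξξ')
    by_contra hlt
    push_neg at hlt
    have h1 : sfun ξ' * g (sfun ξ') ≤ sfun ξ' * g (sfun ξ) :=
      mul_le_mul_of_nonneg_left (hgmono _ _ hs' hlt.le) hs'
    have h2 : sfun ξ' * g (sfun ξ) < sfun ξ * g (sfun ξ) :=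
      mul_lt_mul_of_pos_right hlt (hgpos _ hs)
    rw [hsg, hsg'] at *
    linarith
  -- K facts
  have hKpos : ∀ ξ : ℝ, 0 ≤ ξ → 0 < K ξ := by
    intro ξ hξ
    rw [hK ξ hξ]
    exact div_pos one_pos (hgpos _ (hsfun ξ hξ).1)
  have hKmono : ∀ ξ ξ' : ℝ, 0 ≤ ξ → ξ ≤ ξ' → K ξ' ≤ K ξ := by
    intro ξ ξ' hξ hξξ'
    rw [hK ξ hξ, hK ξ' (hξ.trans hξξ')]
    apply one_div_le_one_div_of_le (hgpos _ (hsfun ξ hξ).1)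
    exact hgmono _ _ (hsfun ξ hξ).1 (hsmono ξ ξ' hξ hξξ')
  have hsK : ∀ ξ : ℝ, 0 ≤ ξ → ξ * K ξ = sfun ξ := by
    intro ξ hξ
    obtain ⟨hs, hsg⟩ := hsfun ξ hξ
    have hgne : g (sfun ξ) ≠ 0 := (hgpos _ hs).ne'
    rw [hK ξ hξ, mul_one_div, div_eq_iff hgne]
    exact hsg.symm
  -- key scalar inequality
  have hkey : ∀ ξ ξ' : ℝ, 0 ≤ ξ → ξ ≤ ξ' →
      (1 - a) * K ξ' * (ξ' - ξ) ≤ ξ' * K ξ' - ξ * K ξ := by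
    intro ξ ξ' hξ hξξ'
    have hξ' : 0 ≤ ξ' := hξ.trans hξξ'
    obtain ⟨hs, hsg⟩ := hsfun ξ hξ
    obtain ⟨hs', hsg'⟩ := hsfun ξ' hξ'
    set s := sfun ξ with hs_def
    set s' := sfun ξ' with hs'_def
    have hss' : s ≤ s' := hsmono ξ ξ' hξ hξξ'
    have hgs' : 0 < g s' := hgpos s' hs'
    have main : s' * g s' - s * g s ≤ A * ((s' - s) * g s') := by
      rw [hg s hs, hg s' hs', Finset.mul_sum, Finset.mul_sum, Finset.mul_sum,
        Finset.mul_sum, ← Finset.sum_sub_distrib]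
      apply Finset.sum_le_sum
      intro i _
      have e1 : s * (c i * s ^ (α i)) = c i * s ^ (1 + α i) := by
        rw [Real.rpow_one_add' hs (ne_of_gt (by linarith [hα_nonneg i]))]
        ring
      have e2 : s' * (c i * s' ^ (α i)) = c i * s' ^ (1 + α i) := by
        rw [Real.rpow_one_add' hs' (ne_of_gt (by linarith [hα_nonneg i]))]
        ring
      have h3 := aux_rpow (α i) s s' (hα_nonneg i) hs hss'
      have h4 : (1:ℝ) + α i ≤ A := by
        have := hαmono.monotone (Fin.le_last i)
        rw [hA]; linarith
      have h5 : 0 ≤ s' ^ (α i) * (s' - s) :=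
        mul_nonneg (Real.rpow_nonneg hs' _) (by linarith)
      calc s' * (c i * s' ^ (α i)) - s * (c i * s ^ (α i))
          = c i * (s' ^ (1 + α i) - s ^ (1 + α i)) := by rw [e1, e2]; ring
        _ ≤ c i * ((1 + α i) * (s' ^ (α i) * (s' - s))) :=
            mul_le_mul_of_nonneg_left h3 (hc i)
        _ ≤ c i * (A * (s' ^ (α i) * (s' - s))) :=
            mul_le_mul_of_nonneg_left (mul_le_mul_of_nonneg_right h4 h5) (hc i)
        _ = A * ((s' - s) * (c i * s' ^ (α i))) := by ring
    have hmain2 : (1 - a) * (ξ' - ξ) ≤ (s' - s) * g s' := by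
      have : (1 - a) * (ξ' - ξ) = (1 / A) * (s' * g s' - s * g s) := by
        rw [ha_eq, hsg, hsg']
      rw [this]
      rw [div_mul_eq_mul_div, one_mul, div_le_iff₀ hApos]
      linarith [main]
    -- now convert
    rw [hsK ξ hξ, hsK ξ' hξ', hK ξ' hξ']
    rw [mul_one_div, div_mul_eq_mul_div, div_le_iff₀ hgs']
    calc (1 - a) * (ξ' - ξ) ≤ (s' - s) * g s' := hmain2
      _ = (sfun ξ' - sfun ξ) * g (sfun ξ') := by rw [← hs_def, ← hs'_def]
  -- core scalar inequality with the inner-product variable t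
  have hcore : ∀ r r' t : ℝ, 0 ≤ r → r ≤ r' → t ≤ r * r' →
      (1 - a) * K r' * (r' ^ 2 + r ^ 2 - 2 * t) ≤
        K r' * r' ^ 2 + K r * r ^ 2 - (K r' + K r) * t := by
    intro r r' t hr hrr' ht
    have hr' : 0 ≤ r' := hr.trans hrr'
    have hKr' : 0 < K r' := hKpos r' hr'
    have hKm : K r' ≤ K r := hKmono r r' hr hrr'
    have hkey' := hkey r r' hr hrr'
    have hP1 : 0 ≤ (K r + K r' - 2 * (1 - a) * K r') * (r * r' - t) := by
      apply mul_nonneg _ (by linarith)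
      nlinarith
    have hP2 : 0 ≤ (r' - r) * ((K r' * r' - K r * r) - (1 - a) * K r' * (r' - r)) := by
      apply mul_nonneg (by linarith)
      nlinarith
    nlinarith [hP1, hP2]
  -- the vector statement
  intro d hd y y'
  set r := ‖y‖ with hr_def
  set r' := ‖y'‖ with hr'_def
  have hr : 0 ≤ r := norm_nonneg y
  have hr' : 0 ≤ r' := norm_nonneg y'
  have hinner : ⟪K r' • y' - K r • y, y' - y⟫ =
      K r' * r' ^ 2 + K r * r ^ 2 - (K r' + K r) * ⟪y, y'⟫ := by
    rw [inner_sub_left, inner_sub_right, inner_sub_right, real_inner_smul_left,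
      real_inner_smul_left, real_inner_smul_left, real_inner_smul_left,
      real_inner_self_eq_norm_sq, real_inner_self_eq_norm_sq, real_inner_comm y' y]
    ring
  have hnorm : ‖y' - y‖ ^ 2 = r' ^ 2 + r ^ 2 - 2 * ⟪y, y'⟫ := by
    rw [norm_sub_sq_real, real_inner_comm y' y]
    ring
  have hCS : ⟪y, y'⟫ ≤ r * r' := real_inner_le_norm y y'
  have hb1 : β - 1 = 1 - a := by rw [hβ]; ring
  rw [hinner, hnorm, hb1]
  rcases le_total r r' with h | h
  · rw [max_eq_right h]
    exact hcore r r' _ hr h hCS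
  · rw [max_eq_left h]
    have := hcore r' r ⟪y, y'⟫ hr' h (by linarith [hCS])
    linarith [this]
end

section
/- There exists a positive constant $c_5$ (depending only on $g$ and the dimension $d$) such that for all vectors $y, y' \in \mathbb{R}^d$, $\big|K(|y'|)\,y' - K(|y|)\,y\big| \le c_5\,|y' - y|$. -/
/-- Lipschitz continuity: there is `c₅ > 0` (depending only on `g` and the dimension `d`)
such that `|K(|y'|) y' - K(|y|) y| ≤ c₅ |y' - y|` for all `y, y' ∈ ℝ^d`. -/
theorem stmt9
    (N : ℕ) (hN : 1 ≤ N)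
    (α : Fin (N + 1) → ℝ) (hα0 : α 0 = 0) (hαmono : StrictMono α)
    (c : Fin (N + 1) → ℝ) (hc : ∀ i, 0 ≤ c i) (hc0 : 0 < c 0) (hcN : 0 < c (Fin.last N))
    (g : ℝ → ℝ) (hg : ∀ s : ℝ, 0 ≤ s → g s = ∑ i, c i * s ^ (α i))
    (sfun : ℝ → ℝ)
    (hsfun : ∀ ξ : ℝ, 0 ≤ ξ → 0 ≤ sfun ξ ∧ sfun ξ * g (sfun ξ) = ξ)
    (K : ℝ → ℝ) (hK : ∀ ξ : ℝ, 0 ≤ ξ → K ξ = 1 / g (sfun ξ))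
    (d : ℕ) :
    ∃ c₅ : ℝ, 0 < c₅ ∧ ∀ y y' : EuclideanSpace ℝ (Fin d),
      ‖K ‖y'‖ • y' - K ‖y‖ • y‖ ≤ c₅ * ‖y' - y‖ := by
  -- exponents are nonnegative
  have hαnn : ∀ i, 0 ≤ α i := fun i => by
    have := hαmono.monotone (Fin.zero_le i); rwa [hα0] at this
  -- g is bounded below by c 0 on [0, ∞)
  have hglb : ∀ s : ℝ, 0 ≤ s → c 0 ≤ g s := by
    intro s hs
    rw [hg s hs]
    have h1 : c 0 * s ^ (α 0) ≤ ∑ i, c i * s ^ (α i) :=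
      Finset.single_le_sum (f := fun i => c i * s ^ (α i))
        (fun i _ => mul_nonneg (hc i) (Real.rpow_nonneg hs _)) (Finset.mem_univ 0)
    rwa [hα0, Real.rpow_zero, mul_one] at h1
  -- g is monotone on [0, ∞)
  have hgmono : ∀ s t : ℝ, 0 ≤ s → s ≤ t → g s ≤ g t := by
    intro s t hs hst
    rw [hg s hs, hg t (hs.trans hst)]
    refine Finset.sum_le_sum fun i _ => ?_
    exact mul_le_mul_of_nonneg_left (Real.rpow_le_rpow hs hst (hαnn i)) (hc i)
  -- basic facts about sfun
  have hsnn : ∀ ξ : ℝ, 0 ≤ ξ → 0 ≤ sfun ξ := fun ξ hξ => (hsfun ξ hξ).1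
  have hseq : ∀ ξ : ℝ, 0 ≤ ξ → sfun ξ * g (sfun ξ) = ξ := fun ξ hξ => (hsfun ξ hξ).2
  -- key inequality: s ≤ t ⇒ (t - s) * c0 ≤ t g t - s g s
  have hkey : ∀ s t : ℝ, 0 ≤ s → s ≤ t → (t - s) * c 0 ≤ t * g t - s * g s := by
    intro s t hs hst
    have h1 : s * g s ≤ s * g t := mul_le_mul_of_nonneg_left (hgmono s t hs hst) hs
    have h2 : (t - s) * c 0 ≤ (t - s) * g t :=
      mul_le_mul_of_nonneg_left (hglb t (hs.trans hst)) (by linarith)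
    nlinarith
  -- sfun is monotone
  have hsmono : ∀ ξ ξ' : ℝ, 0 ≤ ξ → ξ ≤ ξ' → sfun ξ ≤ sfun ξ' := by
    intro ξ ξ' hξ hle
    by_contra h
    push_neg at h
    have := hkey (sfun ξ') (sfun ξ) (hsnn ξ' (hξ.trans hle)) h.le
    rw [hseq ξ hξ, hseq ξ' (hξ.trans hle)] at this
    nlinarith
  -- sfun is Lipschitz with constant 1/c0
  have hslip : ∀ ξ ξ' : ℝ, 0 ≤ ξ → ξ ≤ ξ' → (sfun ξ' - sfun ξ) * c 0 ≤ ξ' - ξ := by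
    intro ξ ξ' hξ hle
    have := hkey (sfun ξ) (sfun ξ') (hsnn ξ hξ) (hsmono ξ ξ' hξ hle)
    rwa [hseq ξ hξ, hseq ξ' (hξ.trans hle)] at this
  -- sfun ξ * c0 ≤ ξ
  have hsle : ∀ ξ : ℝ, 0 ≤ ξ → sfun ξ * c 0 ≤ ξ := by
    intro ξ hξ
    have := hslip 0 ξ le_rfl hξ
    have h0 : sfun 0 = 0 := by
      have h1 := hseq 0 le_rfl
      have h2 := hglb (sfun 0) (hsnn 0 le_rfl)
      nlinarith [hsnn 0 le_rfl]
    rw [h0] at this; linarith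
  -- g (sfun ξ) > 0
  have hgpos : ∀ ξ : ℝ, 0 ≤ ξ → 0 < g (sfun ξ) := fun ξ hξ =>
    lt_of_lt_of_le hc0 (hglb _ (hsnn ξ hξ))
  -- K nonneg and ≤ 1/c0
  have hKnn : ∀ ξ : ℝ, 0 ≤ ξ → 0 ≤ K ξ := by
    intro ξ hξ; rw [hK ξ hξ]; exact le_of_lt (div_pos one_pos (hgpos ξ hξ))
  have hKle : ∀ ξ : ℝ, 0 ≤ ξ → K ξ ≤ 1 / c 0 := by
    intro ξ hξ; rw [hK ξ hξ]
    exact one_div_le_one_div_of_le hc0 (hglb _ (hsnn ξ hξ))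
  -- K ξ * ξ = sfun ξ
  have hKξ : ∀ ξ : ℝ, 0 ≤ ξ → K ξ * ξ = sfun ξ := by
    intro ξ hξ
    rw [hK ξ hξ]
    have h1 := hseq ξ hξ
    field_simp [(hgpos ξ hξ).ne']
    linarith
  refine ⟨3 / c 0, div_pos (by norm_num) hc0, ?_⟩
  -- main claim under WLOG ‖y‖ ≤ ‖y'‖
  have key : ∀ y y' : EuclideanSpace ℝ (Fin d), ‖y‖ ≤ ‖y'‖ →
      ‖K ‖y'‖ • y' - K ‖y‖ • y‖ ≤ 3 / c 0 * ‖y' - y‖ := by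
    intro y y' hle
    set ξ : ℝ := ‖y‖ with hξdef
    set ξ' : ℝ := ‖y'‖ with hξ'def
    have hξnn : 0 ≤ ξ := norm_nonneg _
    have hξ'nn : 0 ≤ ξ' := norm_nonneg _
    have hδ : ξ' - ξ ≤ ‖y' - y‖ := by
      have := abs_norm_sub_norm_le y' y
      rw [abs_le] at this; linarith [this.2]
    have hid : K ξ' • y' - K ξ • y = K ξ' • (y' - y) + (K ξ' - K ξ) • y := by
      rw [smul_sub, sub_smul]; abel
    have h1 : ‖K ξ' • (y' - y)‖ ≤ 1 / c 0 * ‖y' - y‖ := by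
      rw [norm_smul, Real.norm_eq_abs, abs_of_nonneg (hKnn ξ' hξ'nn)]
      exact mul_le_mul_of_nonneg_right (hKle ξ' hξ'nn) (norm_nonneg _)
    have h2 : ‖(K ξ' - K ξ) • y‖ ≤ 1 / c 0 * ‖y' - y‖ := by
      rw [norm_smul, Real.norm_eq_abs, ← hξdef]
      have habs : |K ξ' - K ξ| * ξ = |K ξ' * ξ - K ξ * ξ| := by
        rw [← abs_of_nonneg hξnn, ← abs_mul, sub_mul, abs_of_nonneg hξnn]
      rw [habs, hKξ ξ hξnn]
      have hσle : sfun ξ ≤ sfun ξ' := hsmono ξ ξ' hξnn hle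
      have hlip := hslip ξ ξ' hξnn hle
      have hKξ' := hKξ ξ' hξ'nn
      have hKnn' := hKnn ξ' hξ'nn
      have hKle' := hKle ξ' hξ'nn
      have hub : K ξ' * ξ - sfun ξ ≤ (ξ' - ξ) / c 0 := by
        have : K ξ' * ξ ≤ K ξ' * ξ' := mul_le_mul_of_nonneg_left hle hKnn'
        rw [hKξ'] at this
        rw [div_eq_mul_inv]
        nlinarith [mul_le_mul_of_nonneg_right hlip (inv_nonneg.mpr hc0.le),
          mul_inv_cancel₀ hc0.ne']
      have hlb : sfun ξ - K ξ' * ξ ≤ (ξ' - ξ) / c 0 := by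
        have h3 : sfun ξ - K ξ' * ξ ≤ sfun ξ' - K ξ' * ξ := by linarith
        have h4 : sfun ξ' - K ξ' * ξ = K ξ' * (ξ' - ξ) := by rw [← hKξ']; ring
        have h5 : K ξ' * (ξ' - ξ) ≤ 1 / c 0 * (ξ' - ξ) :=
          mul_le_mul_of_nonneg_right hKle' (by linarith)
        calc sfun ξ - K ξ' * ξ ≤ K ξ' * (ξ' - ξ) := by rw [← h4]; exact h3
          _ ≤ 1 / c 0 * (ξ' - ξ) := h5
          _ = (ξ' - ξ) / c 0 := by ring
      have habs2 : |K ξ' * ξ - sfun ξ| ≤ (ξ' - ξ) / c 0 := abs_le.mpr ⟨by linarith, hub⟩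
      calc |K ξ' * ξ - sfun ξ| ≤ (ξ' - ξ) / c 0 := habs2
        _ ≤ ‖y' - y‖ / c 0 := by gcongr
        _ = 1 / c 0 * ‖y' - y‖ := by ring
    calc ‖K ξ' • y' - K ξ • y‖ ≤ ‖K ξ' • (y' - y)‖ + ‖(K ξ' - K ξ) • y‖ := by
          rw [hid]; exact norm_add_le _ _
      _ ≤ 1 / c 0 * ‖y' - y‖ + 1 / c 0 * ‖y' - y‖ := add_le_add h1 h2
      _ = 2 / c 0 * ‖y' - y‖ := by ring
      _ ≤ 3 / c 0 * ‖y' - y‖ :=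
          mul_le_mul_of_nonneg_right ((div_le_div_iff_of_pos_right hc0).mpr (by norm_num))
            (norm_nonneg _)
  intro y y'
  rcases le_total ‖y‖ ‖y'‖ with h | h
  · exact key y y' h
  · have := key y' y h
    rwa [norm_sub_rev (K ‖y‖ • y), norm_sub_rev y] at this
end

section
/- Let $\theta > 0$ and let $y, h, f : [0,\infty) \to \mathbb{R}$ be continuous with $y(t) \ge 0$, $h(t) > 0$, $f(t) \ge 0$ for all $t$, and suppose $y$ is differentiable on $(0,\infty)$ with $y'(t) + h(t)\,y(t)^\theta \le f(t)$ for all $t > 0$. Then for every continuous increasing function $F : [0,\infty) \to \mathbb{R}$ satisfying $F(t) \ge f(t)/h(t)$ for all $t \ge 0$, one has $y(t) \le y(0) + F(t)^{1/\theta}$ for all $t \ge 0$. -/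
/-- Gronwall-type inequality: if `y' + h y^θ ≤ f` on `(0,∞)`, then for every continuous
increasing envelope `F` of `f/h` on `[0,∞)`, `y(t) ≤ y(0) + F(t)^{1/θ}` for all `t ≥ 0`. -/
theorem stmt11
    (θ : ℝ) (hθ : 0 < θ)
    (y h f : ℝ → ℝ)
    (hycont : ContinuousOn y (Set.Ici (0 : ℝ)))
    (hhcont : ContinuousOn h (Set.Ici (0 : ℝ)))
    (hfcont : ContinuousOn f (Set.Ici (0 : ℝ)))
    (hy : ∀ t : ℝ, 0 ≤ t → 0 ≤ y t)
    (hh : ∀ t : ℝ, 0 ≤ t → 0 < h t)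
    (hf : ∀ t : ℝ, 0 ≤ t → 0 ≤ f t)
    (y' : ℝ → ℝ) (hderiv : ∀ t : ℝ, 0 < t → HasDerivAt y (y' t) t)
    (hineq : ∀ t : ℝ, 0 < t → y' t + h t * y t ^ θ ≤ f t) :
    ∀ F : ℝ → ℝ, ContinuousOn F (Set.Ici (0 : ℝ)) → MonotoneOn F (Set.Ici (0 : ℝ)) →
      (∀ t : ℝ, 0 ≤ t → f t / h t ≤ F t) →
      ∀ t : ℝ, 0 ≤ t → y t ≤ y 0 + F t ^ (1 / θ) := by
  intro F hFcont hFmono hFenv t ht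
  by_contra hcon
  push_neg at hcon
  set M := y 0 + F t ^ (1 / θ) with hM
  have hF0 : 0 ≤ F t := le_trans (div_nonneg (hf t ht) (hh t ht).le) (hFenv t ht)
  have hFt_nonneg : 0 ≤ F t ^ (1 / θ) := Real.rpow_nonneg hF0 _
  have h0M : y 0 ≤ M := le_add_of_nonneg_right hFt_nonneg
  have htpos : 0 < t := by
    rcases ht.lt_or_eq with h' | h'
    · exact h'
    · exfalso; rw [← h'] at hcon; exact absurd h0M (not_le.mpr hcon)
  set S := Set.Icc (0:ℝ) t ∩ y ⁻¹' Set.Iic M with hS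
  have hS0 : (0:ℝ) ∈ S := ⟨⟨le_rfl, ht⟩, h0M⟩
  have hSc : IsClosed S :=
    (hycont.mono (Set.Icc_subset_Ici_self)).preimage_isClosed_of_isClosed
      isClosed_Icc isClosed_Iic
  have hScomp : IsCompact S :=
    isCompact_Icc.of_isClosed_subset hSc Set.inter_subset_left
  set s₀ := sSup S with hs₀
  have hs₀mem : s₀ ∈ S := hScomp.sSup_mem ⟨0, hS0⟩
  have hs₀0 : 0 ≤ s₀ := hs₀mem.1.1
  have hs₀t : s₀ ≤ t := hs₀mem.1.2
  have hys₀ : y s₀ ≤ M := hs₀mem.2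
  have hs₀lt : s₀ < t := lt_of_le_of_ne hs₀t (by
    intro hEq
    rw [hEq] at hys₀
    exact absurd hys₀ (not_le.mpr hcon))
  have hbdd : BddAbove S := hScomp.bddAbove
  have hgt : ∀ x ∈ Set.Ioo s₀ t, M < y x := by
    intro x hx
    by_contra hle
    push_neg at hle
    have hxS : x ∈ S := ⟨⟨le_trans hs₀0 hx.1.le, hx.2.le⟩, hle⟩
    exact absurd (le_csSup hbdd hxS) (not_le.mpr hx.1)
  have hanti : StrictAntiOn y (Set.Icc s₀ t) := by
    apply StrictAntiOn.mono ?_ (le_refl (Set.Icc s₀ t))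
    apply strictAntiOn_of_deriv_neg (convex_Icc s₀ t)
      (hycont.mono (Set.Icc_subset_Ici_self.trans (Set.Ici_subset_Ici.mpr hs₀0)))
    · intro x hx
      rw [interior_Icc] at hx
      have hx0 : 0 < x := lt_of_le_of_lt hs₀0 hx.1
      rw [(hderiv x hx0).deriv]
      have hyx : M < y x := hgt x hx
      have hyx' : F t ^ (1 / θ) < y x := lt_of_le_of_lt (le_add_of_nonneg_left (hy 0 le_rfl)) hyx
      have hpow : F t < y x ^ θ := by
        have h1 : (F t ^ (1 / θ)) ^ θ < y x ^ θ :=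
          Real.rpow_lt_rpow hFt_nonneg hyx' hθ
        rwa [← Real.rpow_mul hF0, one_div_mul_cancel hθ.ne', Real.rpow_one] at h1
      have hFx : F x ≤ F t := hFmono (Set.mem_Ici.mpr hx0.le) (Set.mem_Ici.mpr ht) hx.2.le
      have hfx : f x / h x < y x ^ θ := lt_of_le_of_lt (le_trans (hFenv x hx0.le) hFx) hpow
      have hhx : 0 < h x := hh x hx0.le
      have h2 : f x < h x * y x ^ θ := by
        rw [div_lt_iff₀ hhx] at hfx
        linarith [hfx]
      have := hineq x hx0
      linarith
  have h1 : y t < y s₀ :=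
    hanti (Set.left_mem_Icc.mpr hs₀t) (Set.right_mem_Icc.mpr hs₀t) hs₀lt
  linarith
end

section
/- Let $\theta > 0$ and let $y, h, f : [0,\infty) \to \mathbb{R}$ be continuous with $y(t) \ge 0$, $h(t) > 0$, $f(t) \ge 0$ for all $t$, and suppose $y$ is differentiable on $(0,\infty)$ with $y'(t) + h(t)\,y(t)^\theta \le f(t)$ for all $t > 0$. If $\int_0^\infty h(t)\,dt = \infty$, then $\limsup_{t\to\infty} y(t) \le \limsup_{t\to\infty} \big(f(t)/h(t)\big)^{1/\theta}$. -/
open Filter MeasureTheory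

/-- Gronwall-type asymptotic inequality: if `y' + h y^θ ≤ f` on `(0,∞)` and
`∫_0^∞ h(t) dt = ∞`, then `limsup_{t→∞} y(t) ≤ limsup_{t→∞} (f(t)/h(t))^{1/θ}`
(understood when the right-hand side limsup is finite). -/
theorem stmt12
    (θ : ℝ) (hθ : 0 < θ)
    (y h f : ℝ → ℝ)
    (hycont : ContinuousOn y (Set.Ici (0 : ℝ)))
    (hhcont : ContinuousOn h (Set.Ici (0 : ℝ)))
    (hfcont : ContinuousOn f (Set.Ici (0 : ℝ)))
    (hy : ∀ t : ℝ, 0 ≤ t → 0 ≤ y t)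
    (hh : ∀ t : ℝ, 0 ≤ t → 0 < h t)
    (hf : ∀ t : ℝ, 0 ≤ t → 0 ≤ f t)
    (y' : ℝ → ℝ) (hderiv : ∀ t : ℝ, 0 < t → HasDerivAt y (y' t) t)
    (hineq : ∀ t : ℝ, 0 < t → y' t + h t * y t ^ θ ≤ f t)
    (hhint : ∫⁻ t in Set.Ioi (0 : ℝ), ENNReal.ofReal (h t) = ⊤)
    (hbdd : IsBoundedUnder (· ≤ ·) atTop (fun t : ℝ => (f t / h t) ^ (1 / θ))) :
    limsup y atTop ≤ limsup (fun t : ℝ => (f t / h t) ^ (1 / θ)) atTop := by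
  set g : ℝ → ℝ := fun t : ℝ => (f t / h t) ^ (1 / θ) with hgdef
  -- continuous extension of h to all of ℝ
  set h₁ : ℝ → ℝ := fun t => h (max t 0) with hh₁def
  have hh₁cont : Continuous h₁ :=
    hhcont.comp_continuous (continuous_id.max continuous_const) fun x => Set.mem_Ici.mpr (le_max_right _ _)
  have hh₁eq : ∀ t : ℝ, 0 ≤ t → h₁ t = h t := by
    intro t ht; simp [hh₁def, max_eq_left ht]
  have hh₁pos : ∀ t : ℝ, 0 < h₁ t := fun t => hh _ (le_max_right _ _)
  have hgnn : ∀ t : ℝ, 0 ≤ t → 0 ≤ g t := fun t ht =>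
    Real.rpow_nonneg (div_nonneg (hf t ht) (hh t ht).le) _
  have hL0 : (0 : ℝ) ≤ limsup g atTop :=
    Filter.le_limsup_of_frequently_le (((eventually_ge_atTop (0 : ℝ)).mono hgnn).frequently) hbdd
  have hyco : IsCoboundedUnder (· ≤ ·) atTop y :=
    Filter.IsBoundedUnder.isCoboundedUnder_le
      ⟨0, eventually_map.mpr ((eventually_ge_atTop (0 : ℝ)).mono hy)⟩
  suffices key : ∀ c : ℝ, limsup g atTop < c → ∀ᶠ t in atTop, y t ≤ c by
    by_contra hcon
    push_neg at hcon
    obtain ⟨c, hc1, hc2⟩ := exists_between hcon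
    exact absurd (Filter.limsup_le_of_le hyco (key c hc1)) (not_le.mpr hc2)
  intro c hc
  obtain ⟨m, hm1, hm2⟩ := exists_between hc
  have hm0 : 0 < m := lt_of_le_of_lt hL0 hm1
  have hev : ∀ᶠ t in atTop, g t < m := Filter.eventually_lt_of_limsup_lt hm1 hbdd
  rw [eventually_atTop] at hev
  obtain ⟨T₀, hT₀⟩ := hev
  set T : ℝ := max T₀ 1 with hTdef
  have hT1 : (1 : ℝ) ≤ T := le_max_right _ _
  have hT0 : (0 : ℝ) < T := lt_of_lt_of_le one_pos hT1
  -- eventual bound on f in terms of h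
  have hfh : ∀ t, T ≤ t → f t ≤ m ^ θ * h t := by
    intro t ht
    have htnn : 0 ≤ t := le_trans hT0.le ht
    have h1 : g t < m := hT₀ t (le_trans (le_max_left _ _) ht)
    have h2 : f t / h t = g t ^ θ := by
      rw [hgdef]
      rw [← Real.rpow_mul (div_nonneg (hf t htnn) (hh t htnn).le), one_div_mul_cancel hθ.ne',
        Real.rpow_one]
    have h3 : f t / h t ≤ m ^ θ := h2 ▸ Real.rpow_le_rpow (hgnn t htnn) h1.le hθ.le
    exact (div_le_iff₀ (hh t htnn)).mp h3
  -- derivative bound when y is above c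
  have hderneg : ∀ x, T ≤ x → c < y x → y' x ≤ h x * (m ^ θ - c ^ θ) := by
    intro x hx hcx
    have hx0 : 0 < x := lt_of_lt_of_le hT0 hx
    have h1 := hineq x hx0
    have h2 : h x * c ^ θ ≤ h x * y x ^ θ :=
      mul_le_mul_of_nonneg_left
        (Real.rpow_le_rpow (le_trans hm0.le hm2.le) hcx.le hθ.le) (hh x hx0.le).le
    have h3 := hfh x hx
    have h4 : m ^ θ * h x = h x * m ^ θ := mul_comm _ _
    rw [mul_sub]
    linarith
  have hmc : m ^ θ - c ^ θ < 0 := sub_neg.mpr (Real.rpow_lt_rpow hm0.le hm2 hθ)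
  -- once below c (after time T), stay below c
  have hstay : ∀ t₀, T ≤ t₀ → y t₀ ≤ c → ∀ t, t₀ ≤ t → y t ≤ c := by
    intro t₀ ht₀ hyt₀ t₁ ht₁
    by_contra hyc
    push_neg at hyc
    have ht₀0 : 0 < t₀ := lt_of_lt_of_le hT0 ht₀
    set S : Set ℝ := Set.Icc t₀ t₁ ∩ y ⁻¹' Set.Iic c with hSdef
    have hSclosed : IsClosed S :=
      (hycont.mono fun x hx => le_trans ht₀0.le hx.1).preimage_isClosed_of_isClosed
        isClosed_Icc isClosed_Iic
    have hSne : S.Nonempty := ⟨t₀, ⟨le_refl _, ht₁⟩, hyt₀⟩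
    have hSbdd : BddAbove S := (bddAbove_Icc).mono Set.inter_subset_left
    set s := sSup S with hsdef
    have hsS : s ∈ S := hSclosed.csSup_mem hSne hSbdd
    have hys : y s ≤ c := hsS.2
    have hs1 : s ∈ Set.Icc t₀ t₁ := hsS.1
    have hst₁ : s < t₁ :=
      lt_of_le_of_ne hs1.2 fun e => absurd (e ▸ hys) (not_le.mpr hyc)
    have hmid : ∀ u, s < u → u ≤ t₁ → c < y u := by
      intro u hu1 hu2
      by_contra hun
      push_neg at hun
      exact absurd (le_csSup hSbdd (⟨⟨le_trans hs1.1 hu1.le, hu2⟩, hun⟩ : u ∈ S))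
        (not_le.mpr hu1)
    have hanti : AntitoneOn y (Set.Icc s t₁) := by
      apply antitoneOn_of_deriv_nonpos (convex_Icc _ _)
      · exact hycont.mono fun x hx => le_trans (le_trans ht₀0.le hs1.1) hx.1
      · rw [interior_Icc]
        intro x hx
        have hx0 : 0 < x := lt_of_le_of_lt (le_trans ht₀0.le hs1.1) hx.1
        exact (hderiv x hx0).differentiableAt.differentiableWithinAt
      · rw [interior_Icc]
        intro x hx
        have hx0 : 0 < x := lt_of_le_of_lt (le_trans ht₀0.le hs1.1) hx.1
        rw [(hderiv x hx0).deriv]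
        have h1 := hderneg x (le_trans (le_trans ht₀ hs1.1) hx.1.le) (hmid x hx.1 hx.2.le)
        exact le_trans h1 (mul_nonpos_of_nonneg_of_nonpos (hh x hx0.le).le hmc.le)
    have := hanti ⟨le_refl s, hst₁.le⟩ ⟨hst₁.le, le_refl t₁⟩ hst₁.le
    linarith
  -- there exists a time after T where y is below c
  have hexists : ∃ t₀, T ≤ t₀ ∧ y t₀ ≤ c := by
    by_contra hne
    push_neg at hne
    set δ : ℝ := c ^ θ - m ^ θ with hδdef
    have hδ0 : 0 < δ := by simp only [hδdef]; linarith
    set H : ℝ → ℝ := fun t => ∫ s in T..t, h₁ s with hHdef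
    have hHderiv : ∀ x : ℝ, HasDerivAt H (h₁ x) x := fun x =>
      intervalIntegral.integral_hasDerivAt_right (hh₁cont.intervalIntegrable _ _)
        hh₁cont.stronglyMeasurable.stronglyMeasurableAtFilter hh₁cont.continuousAt
    have hHcont : Continuous H :=
      continuous_iff_continuousAt.mpr fun x => (hHderiv x).continuousAt
    set G : ℝ → ℝ := fun t => y t + δ * H t with hGdef
    have hanti : AntitoneOn G (Set.Ici T) := by
      apply antitoneOn_of_deriv_nonpos (convex_Ici _)
      · exact (hycont.mono fun x hx => le_trans hT0.le hx).add
          ((continuous_const.mul hHcont).continuousOn)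
      · rw [interior_Ici]
        intro x hx
        exact ((hderiv x (lt_trans hT0 hx)).add
          ((hHderiv x).const_mul δ)).differentiableAt.differentiableWithinAt
      · rw [interior_Ici]
        intro x hx
        have hx0 : 0 < x := lt_trans hT0 hx
        have hd : HasDerivAt G (y' x + δ * h₁ x) x :=
          (hderiv x hx0).add ((hHderiv x).const_mul δ)
        rw [hd.deriv, hh₁eq x hx0.le]
        have h1 := hderneg x hx.le (hne x hx.le)
        have h2 : h x * (m ^ θ - c ^ θ) + δ * h x = 0 := by rw [hδdef]; ring
        linarith
    have hHb : ∀ t, T ≤ t → H t ≤ y T / δ := by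
      intro t ht
      have h2 : G t ≤ G T := hanti (Set.self_mem_Ici) ht ht
      have h3 : H T = 0 := intervalIntegral.integral_same
      have h4 : 0 ≤ y t := hy t (le_trans hT0.le ht)
      rw [le_div_iff₀ hδ0]
      simp only [hGdef, h3, mul_zero, add_zero] at h2
      nlinarith
    -- divergence of the integral of h gives a contradiction
    set ν : MeasureTheory.Measure ℝ :=
      MeasureTheory.volume.withDensity (fun t => ENNReal.ofReal (h₁ t)) with hνdef
    have hν : ∀ s : Set ℝ, MeasurableSet s →
        ν s = ∫⁻ t in s, ENNReal.ofReal (h₁ t) := fun s hs =>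
      MeasureTheory.withDensity_apply _ hs
    have hνIoi0 : ν (Set.Ioi 0) = ⊤ := by
      rw [hν _ measurableSet_Ioi, ← hhint]
      exact MeasureTheory.setLIntegral_congr_fun measurableSet_Ioi
        (fun x hx => congrArg ENNReal.ofReal (hh₁eq x (le_of_lt hx)))
    have hνfin : ν (Set.Ioc 0 T) < ⊤ := by
      obtain ⟨z, hz, hzmax⟩ := isCompact_Icc.exists_isMaxOn
        ⟨0, Set.left_mem_Icc.mpr hT0.le⟩ (hh₁cont.continuousOn : ContinuousOn h₁ (Set.Icc 0 T))
      rw [hν _ measurableSet_Ioc]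
      calc ∫⁻ t in Set.Ioc 0 T, ENNReal.ofReal (h₁ t)
          ≤ ∫⁻ _ in Set.Ioc 0 T, ENNReal.ofReal (h₁ z) := by
            refine MeasureTheory.setLIntegral_mono' measurableSet_Ioc fun x hx => ?_
            exact ENNReal.ofReal_le_ofReal (hzmax ⟨hx.1.le, hx.2⟩)
        _ = ENNReal.ofReal (h₁ z) * MeasureTheory.volume (Set.Ioc 0 T) :=
            MeasureTheory.setLIntegral_const _ _
        _ < ⊤ := by
            rw [Real.volume_Ioc]
            exact ENNReal.mul_lt_top ENNReal.ofReal_lt_top ENNReal.ofReal_lt_top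
    have hνIoiT : ν (Set.Ioi T) = ⊤ := by
      by_contra hne'
      have hsub : Set.Ioi (0 : ℝ) ⊆ Set.Ioc 0 T ∪ Set.Ioi T := fun x hx =>
        (le_or_gt x T).elim (fun h' => Or.inl ⟨hx, h'⟩) fun h' => Or.inr h'
      have h1 : ν (Set.Ioi (0 : ℝ)) ≤ ν (Set.Ioc 0 T) + ν (Set.Ioi T) :=
        le_trans (measure_mono hsub) (measure_union_le _ _)
      rw [hνIoi0] at h1
      exact absurd h1 (not_le.mpr (ENNReal.add_lt_top.mpr
        ⟨hνfin, lt_top_iff_ne_top.mpr hne'⟩))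
    have hmono : Monotone fun n : ℕ => Set.Ioc T (T + n) := by
      intro a b hab
      exact Set.Ioc_subset_Ioc_right (by exact_mod_cast add_le_add_right (Nat.cast_le.mpr hab) T)
    have hunion : (⋃ n : ℕ, Set.Ioc T (T + n)) = Set.Ioi T := by
      ext x
      simp only [Set.mem_iUnion, Set.mem_Ioc, Set.mem_Ioi]
      constructor
      · rintro ⟨n, h1, _⟩; exact h1
      · intro hx
        obtain ⟨n, hn⟩ := exists_nat_ge (x - T)
        exact ⟨n, hx, by linarith⟩
    have htend := MeasureTheory.tendsto_measure_iUnion_atTop (μ := ν) hmono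
    rw [hunion, hνIoiT] at htend
    have hevgt : ∀ᶠ n : ℕ in atTop,
        ν (Set.Ioc T (T + n)) ∈ Set.Ioi (ENNReal.ofReal (y T / δ)) :=
      htend.eventually_mem (Ioi_mem_nhds (ENNReal.ofReal_lt_top))
    obtain ⟨n, hn⟩ := hevgt.exists
    have hle : T ≤ T + (n : ℝ) := le_add_of_nonneg_right (Nat.cast_nonneg n)
    have hint : MeasureTheory.IntegrableOn h₁ (Set.Ioc T (T + n)) :=
      (intervalIntegrable_iff_integrableOn_Ioc_of_le hle).mp (hh₁cont.intervalIntegrable _ _)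
    have hHeq : ENNReal.ofReal (H (T + n)) = ν (Set.Ioc T (T + n)) := by
      rw [hν _ measurableSet_Ioc]
      simp only [hHdef]
      rw [intervalIntegral.integral_of_le hle]
      exact MeasureTheory.ofReal_integral_eq_lintegral_ofReal hint
        (ae_of_all _ fun x => (hh₁pos x).le)
    rw [← hHeq] at hn
    have hlt : y T / δ < H (T + n) :=
      (ENNReal.ofReal_lt_ofReal_iff_of_nonneg (div_nonneg (hy T hT0.le) hδ0.le)).mp
        (Set.mem_Ioi.mp hn)
    exact absurd (hHb (T + n) hle) (not_le.mpr hlt)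
  obtain ⟨t₀, ht₀T, ht₀⟩ := hexists
  rw [eventually_atTop]
  exact ⟨t₀, hstay t₀ ht₀T ht₀⟩
end
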